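/- arXiv:2512.10171 — 4 statements merged into one kernel-verified Lean document; each statement's English description precedes it below -/
import Mathlib

section
/- Let L(x) := exp((log log x) · sin(log log x)) for x > e, and let p : ℕ → (0,1) be a sequence. Define G_n := n · p_n · log(1/p_n) for n ∈ ℕ, and a_n := n · p_n / L(n²). Suppose there exist constants 0 < A₋ ≤ A₊ < ∞ such that A₋ ≤ liminf_{n→∞} a_n and limsup_{n→∞} a_n ≤ A₊. Then A₋/2 ≤ liminf_{n→∞} G_n. -/
open Filter Real

private lemma aux_tendsto_log_div (C : ℝ) (hC : 0 < C) :
    Tendsto (fun n : ℕ => Real.log (C * Real.log n) / Real.log n) atTop (nhds 0) := by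
  have hF : Tendsto (fun t : ℝ => Real.log (C * t) / t) atTop (nhds 0) := by
    have h1 : Tendsto (fun t : ℝ => Real.log C / t + Real.log t / t) atTop (nhds 0) := by
      have := (tendsto_const_nhds (x := Real.log C)).div_atTop (tendsto_id (α := ℝ))
      have h2 := Real.isLittleO_log_id_atTop.tendsto_div_nhds_zero
      simpa using this.add h2
    refine h1.congr' ?_
    filter_upwards [eventually_gt_atTop (0:ℝ)] with t ht
    rw [Real.log_mul (ne_of_gt hC) (ne_of_gt ht), add_div]
  exact hF.comp (Real.tendsto_log_atTop.comp tendsto_natCast_atTop_atTop)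

/-- Let `L(x) = exp((log log x)·sin(log log x))`, `p : ℕ → (0,1)`,
`G_n = n·p_n·log(1/p_n)` and `a_n = n·p_n / L(n²)`. If `0 < A₋ ≤ A₊ < ∞` are such that
`A₋ ≤ liminf a_n` and `limsup a_n ≤ A₊`, then `A₋/2 ≤ liminf G_n`. -/
theorem stmt_10 (p : ℕ → ℝ) (hp : ∀ n, p n ∈ Set.Ioo (0 : ℝ) 1)
    (Alo Ahi : ℝ) (hAlo : 0 < Alo) (hA : Alo ≤ Ahi)
    (hliminf : (Alo : EReal) ≤
      Filter.liminf
        (fun n : ℕ =>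
          (((n : ℝ) * p n /
            Real.exp (Real.log (Real.log ((n : ℝ) ^ 2)) *
              Real.sin (Real.log (Real.log ((n : ℝ) ^ 2))))) : EReal))
        Filter.atTop)
    (hlimsup :
      Filter.limsup
        (fun n : ℕ =>
          (((n : ℝ) * p n /
            Real.exp (Real.log (Real.log ((n : ℝ) ^ 2)) *
              Real.sin (Real.log (Real.log ((n : ℝ) ^ 2))))) : EReal))
        Filter.atTop ≤ (Ahi : EReal)) :
    ((Alo / 2 : ℝ) : EReal) ≤
      Filter.liminf
        (fun n : ℕ => (((n : ℝ) * p n * Real.log (1 / p n)) : EReal))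
        Filter.atTop := by
  set C : ℝ := Ahi + 1 with hCdef
  have hC : 0 < C := by simp only [hCdef]; linarith
  -- the key eventual lower bound, for positive targets
  have key0 : ∀ c : ℝ, 0 < c → c < Alo / 2 →
      (c : EReal) ≤ Filter.liminf
        (fun n : ℕ => (((n : ℝ) * p n * Real.log (1 / p n)) : EReal)) Filter.atTop := by
    intro c hc0 hc
    refine Filter.le_liminf_of_le (by isBoundedDefault) ?_
    -- set m between c and Alo/2
    set m : ℝ := (c + Alo / 2) / 2 with hmdef
    have hcm : c < m := by simp only [hmdef]; linarith
    have hm0 : 0 < m := lt_trans hc0 hcm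
    have hmA : 2 * m < Alo := by simp only [hmdef]; linarith
    -- eventual facts
    have e1 : ∀ᶠ n : ℕ in atTop, ((2 * m : ℝ) : EReal) <
        (((n : ℝ) * p n /
            Real.exp (Real.log (Real.log ((n : ℝ) ^ 2)) *
              Real.sin (Real.log (Real.log ((n : ℝ) ^ 2))))) : EReal) := by
      refine Filter.eventually_lt_of_lt_liminf ?_
      exact lt_of_lt_of_le (by exact_mod_cast EReal.coe_lt_coe_iff.mpr hmA) hliminf
    have e2 : ∀ᶠ n : ℕ in atTop,
        (((n : ℝ) * p n /
            Real.exp (Real.log (Real.log ((n : ℝ) ^ 2)) *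
              Real.sin (Real.log (Real.log ((n : ℝ) ^ 2))))) : EReal) < ((C : ℝ) : EReal) := by
      refine Filter.eventually_lt_of_limsup_lt ?_
      refine lt_of_le_of_lt hlimsup ?_
      exact_mod_cast EReal.coe_lt_coe_iff.mpr (by simp [hCdef])
    -- the tendsto facts
    have htends := aux_tendsto_log_div (2 * C) (by positivity)
    have hh : Tendsto (fun n : ℕ =>
        m / Real.log n * (Real.log n - Real.log (2 * C * Real.log n))) atTop (nhds m) := by
      have h0 : Tendsto (fun n : ℕ =>
          m - m * (Real.log (2 * C * Real.log n) / Real.log n)) atTop (nhds m) := by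
        have := tendsto_const_nhds (x := m) |>.sub ((tendsto_const_nhds (x := m)).mul htends)
        simpa using this
      refine h0.congr' ?_
      filter_upwards [(Real.tendsto_log_atTop.comp
        (tendsto_natCast_atTop_atTop (R := ℝ))).eventually_gt_atTop 0] with n ht
      have ht' : Real.log (n : ℝ) ≠ 0 := ne_of_gt ht
      field_simp
    have e3 : ∀ᶠ n : ℕ in atTop,
        c < m / Real.log n * (Real.log n - Real.log (2 * C * Real.log n)) :=
      hh.eventually (eventually_gt_nhds hcm)
    have e4 : ∀ᶠ n : ℕ in atTop,
        Real.log (2 * C * Real.log n) / Real.log n < 1/2 :=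
      htends.eventually (eventually_lt_nhds (by norm_num))
    have e5 : ∀ᶠ n : ℕ in atTop, (3:ℝ) ≤ (n : ℝ) := by
      exact_mod_cast eventually_ge_atTop 3
    filter_upwards [e1, e2, e3, e4, e5] with n h1 h2 h3 h4 h5
    -- now the real computation for fixed n
    set t : ℝ := Real.log n with htdef
    have hn0 : (0:ℝ) < n := by linarith
    have ht1 : 1 < t := by
      have hexp : Real.exp 1 < (n:ℝ) :=
        lt_of_lt_of_le (lt_trans Real.exp_one_lt_d9 (by norm_num)) h5
      calc (1:ℝ) = Real.log (Real.exp 1) := (Real.log_exp 1).symm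
        _ < t := Real.log_lt_log (Real.exp_pos 1) hexp
    have ht0 : 0 < t := by linarith
    have hlog2 : Real.log ((n : ℝ) ^ 2) = 2 * t := by
      rw [Real.log_pow, htdef]; push_cast; ring
    have h2t : (1:ℝ) < 2 * t := by linarith
    set ℓ : ℝ := Real.log (2 * t) with hldef
    have hl0 : 0 ≤ ℓ := Real.log_nonneg (le_of_lt h2t)
    have hLlo : 1 / (2 * t) ≤ Real.exp (ℓ * Real.sin ℓ) := by
      have hs : -1 ≤ Real.sin ℓ := Real.neg_one_le_sin ℓ
      have : -ℓ ≤ ℓ * Real.sin ℓ := by nlinarith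
      calc 1 / (2 * t) = Real.exp (-ℓ) := by
            rw [Real.exp_neg, hldef, Real.exp_log (by linarith), one_div]
          _ ≤ _ := Real.exp_le_exp.mpr this
    have hLhi : Real.exp (ℓ * Real.sin ℓ) ≤ 2 * t := by
      have hs : Real.sin ℓ ≤ 1 := Real.sin_le_one ℓ
      have : ℓ * Real.sin ℓ ≤ ℓ := by nlinarith
      calc Real.exp (ℓ * Real.sin ℓ) ≤ Real.exp ℓ := Real.exp_le_exp.mpr this
          _ = 2 * t := by rw [hldef, Real.exp_log (by linarith)]
    have hLpos : 0 < Real.exp (ℓ * Real.sin ℓ) := Real.exp_pos _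
    -- translate h1, h2 to reals
    rw [hlog2] at h1 h2
    rw [← hldef] at h1 h2
    rw [show ((n:ℝ) : EReal) * ((p n : ℝ) : EReal) / ((Real.exp (ℓ * Real.sin ℓ) : ℝ) : EReal)
        = (((n : ℝ) * p n / Real.exp (ℓ * Real.sin ℓ) : ℝ) : EReal) by
      rw [EReal.coe_div, EReal.coe_mul]] at h1 h2
    have h1' : 2 * m < (n : ℝ) * p n / Real.exp (ℓ * Real.sin ℓ) := by exact_mod_cast h1
    have h2' : (n : ℝ) * p n / Real.exp (ℓ * Real.sin ℓ) < C := by exact_mod_cast h2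
    have hpn : 0 < p n := (hp n).1
    have hnp : 0 < (n : ℝ) * p n := by positivity
    -- lower bound on n * p n
    have hlo : m / t ≤ (n : ℝ) * p n := by
      have := (lt_div_iff₀ hLpos).mp h1'
      calc m / t = (2 * m) * (1 / (2 * t)) := by field_simp
        _ ≤ (2 * m) * Real.exp (ℓ * Real.sin ℓ) :=
            mul_le_mul_of_nonneg_left hLlo (by linarith)
        _ ≤ (n : ℝ) * p n := le_of_lt this
    -- upper bound on n * p n
    have hhi : (n : ℝ) * p n ≤ C * (2 * t) := by
      have := (div_lt_iff₀ hLpos).mp h2'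
      calc (n : ℝ) * p n ≤ C * Real.exp (ℓ * Real.sin ℓ) := le_of_lt this
        _ ≤ C * (2 * t) := mul_le_mul_of_nonneg_left hLhi (le_of_lt hC)
    -- lower bound on log (1 / p n)
    have hloglb : t - Real.log (2 * C * t) ≤ Real.log (1 / p n) := by
      have hinv : (n : ℝ) / (2 * C * t) ≤ 1 / p n := by
        rw [div_le_div_iff₀ (by positivity) hpn]
        calc (n:ℝ) * p n ≤ C * (2 * t) := hhi
          _ = 1 * (2 * C * t) := by ring
      calc t - Real.log (2 * C * t)
          = Real.log ((n : ℝ) / (2 * C * t)) := by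
            rw [Real.log_div (ne_of_gt hn0) (by positivity), htdef]
        _ ≤ Real.log (1 / p n) :=
            Real.log_le_log (by positivity) hinv
    -- positivity of the factor
    have hfac : 0 ≤ t - Real.log (2 * C * t) := by
      rw [div_lt_iff₀ ht0] at h4; linarith
    -- conclude
    have hG : c ≤ (n : ℝ) * p n * Real.log (1 / p n) := by
      calc c ≤ m / t * (t - Real.log (2 * C * t)) := le_of_lt h3
        _ ≤ (n : ℝ) * p n * Real.log (1 / p n) :=
            mul_le_mul hlo hloglb hfac (le_of_lt hnp)
    exact_mod_cast EReal.coe_le_coe_iff.mpr hG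
  -- extend to all real c < Alo/2
  have key : ∀ c : ℝ, c < Alo / 2 →
      (c : EReal) ≤ Filter.liminf
        (fun n : ℕ => (((n : ℝ) * p n * Real.log (1 / p n)) : EReal)) Filter.atTop := by
    intro c hc
    rcases le_or_gt c (Alo / 4) with h | h
    · refine le_trans ?_ (key0 (Alo / 4) (by linarith) (by linarith))
      exact_mod_cast EReal.coe_le_coe_iff.mpr h
    · exact key0 c (by linarith) hc
  -- conclude the liminf bound from density
  by_contra hlt
  push_neg at hlt
  obtain ⟨y, hxy, hyA⟩ := EReal.exists_between_coe_real hlt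
  have hy2 : y < Alo / 2 := by exact_mod_cast hyA
  exact absurd (key y hy2) (not_le.mpr hxy)
end

section
/- Let β > 1/2, let L : (0,∞) → (0,∞) be slowly varying at infinity, and let f : (0,1) → [0,∞) be a probability density on (0,1) (i.e., ∫₀¹ f = 1) such that f(u) / ((1−u)^{β−1} · L(1/(1−u))) → 1 as u ↑ 1. Define I_n := ∫₀¹ n · ((1 − √(1−x))/x)^n · f(x) dx for n ∈ ℕ. Then I_n → 0 as n → ∞. -/
open MeasureTheory

open Set Filter

lemma stmt15_nrn {r : ℝ} (h0 : 0 ≤ r) (h1 : r < 1) (n : ℕ) :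
    (n : ℝ) * r ^ n ≤ (1 - r)⁻¹ := by
  have h1r : (0:ℝ) < 1 - r := by linarith
  have h2 : r ≤ Real.exp (r - 1) := by
    have := Real.add_one_le_exp (r - 1); linarith
  have h3 : r ^ n ≤ Real.exp ((n : ℝ) * (r - 1)) := by
    calc r ^ n ≤ Real.exp (r - 1) ^ n := pow_le_pow_left₀ h0 h2 n
      _ = Real.exp ((n : ℝ) * (r - 1)) := by
          rw [← Real.exp_nat_mul]
  set s : ℝ := (n : ℝ) * (1 - r) with hs
  have hs0 : 0 ≤ s := by positivity
  have hkey : s * Real.exp (-s) ≤ 1 := by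
    have he : s ≤ Real.exp s := by
      have := Real.add_one_le_exp s; linarith
    have hep : 0 < Real.exp s := Real.exp_pos s
    rw [Real.exp_neg]
    calc s * (Real.exp s)⁻¹ ≤ Real.exp s * (Real.exp s)⁻¹ := by
          apply mul_le_mul_of_nonneg_right he (by positivity)
      _ = 1 := mul_inv_cancel₀ hep.ne'
  have h4 : (n : ℝ) * r ^ n * (1 - r) ≤ 1 := by
    have h5 : (n : ℝ) * r ^ n * (1 - r) = s * r ^ n := by rw [hs]; ring
    have h6 : Real.exp ((n : ℝ) * (r - 1)) = Real.exp (-s) := by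
      congr 1; rw [hs]; ring
    rw [h5]
    calc s * r ^ n ≤ s * Real.exp (-s) := by
          rw [← h6]; exact mul_le_mul_of_nonneg_left h3 hs0
      _ ≤ 1 := hkey
  have := (le_div_iff₀ h1r).mpr h4
  rwa [one_div] at this

lemma stmt15_sqrt_pow (a : ℝ) (ha : 0 ≤ a) : ∀ n : ℕ, Real.sqrt (a ^ n) = Real.sqrt a ^ n := by
  intro n
  induction n with
  | zero => simp
  | succ k ih => rw [pow_succ, pow_succ, Real.sqrt_mul (by positivity), ih]

lemma stmt15_g_eq {x : ℝ} (hx : x ∈ Set.Ioo (0:ℝ) 1) :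
    (1 - Real.sqrt (1 - x)) / x = (1 + Real.sqrt (1 - x))⁻¹ := by
  obtain ⟨hx0, hx1⟩ := hx
  set s := Real.sqrt (1 - x) with hsdef
  have hs2 : s ^ 2 = 1 - x := Real.sq_sqrt (by linarith)
  have hs0 : 0 < s := Real.sqrt_pos.mpr (by linarith)
  have hs1 : s < 1 := by
    nlinarith [hs2]
  have hxeq : x = (1 - s) * (1 + s) := by nlinarith [hs2]
  rw [hxeq]
  rw [eq_comm, inv_eq_iff_eq_inv, inv_div]
  rw [mul_comm, mul_div_assoc, div_self (by linarith : (1:ℝ) - s ≠ 0), mul_one]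

lemma stmt15_gpt {x : ℝ} (hx : x ∈ Set.Ioo (0:ℝ) 1) (n : ℕ) :
    (n : ℝ) * ((1 - Real.sqrt (1 - x)) / x) ^ n ≤ 2 * (Real.sqrt (1 - x))⁻¹ ∧
    0 ≤ (1 - Real.sqrt (1 - x)) / x ∧ (1 - Real.sqrt (1 - x)) / x < 1 := by
  obtain ⟨hx0, hx1⟩ := hx
  set s := Real.sqrt (1 - x) with hsdef
  have hs2 : s ^ 2 = 1 - x := Real.sq_sqrt (by linarith)
  have hs0 : 0 < s := Real.sqrt_pos.mpr (by linarith)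
  have hs1 : s < 1 := by nlinarith [hs2]
  have hg : (1 - s) / x = (1 + s)⁻¹ := stmt15_g_eq ⟨hx0, hx1⟩
  rw [hg]
  have hg0 : (0:ℝ) ≤ (1 + s)⁻¹ := by positivity
  have hg1 : (1 + s)⁻¹ < 1 := by
    rw [inv_lt_one_iff₀]; right; linarith
  refine ⟨?_, hg0, hg1⟩
  have h1 := stmt15_nrn hg0 hg1 n
  have he : 1 - (1 + s)⁻¹ = s / (1 + s) := by
    field_simp
    ring
  have h2 : (1 - (1 + s)⁻¹)⁻¹ ≤ 2 * s⁻¹ := by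
    rw [he, inv_div]
    rw [div_le_iff₀ hs0]
    have : 2 * s⁻¹ * s = 2 := by field_simp
    rw [this]; linarith
  exact h1.trans h2

lemma stmt15_iter (L : ℝ → ℝ) (q y₁ : ℝ) (hq0 : 0 ≤ q) (hy₁ : 1 ≤ y₁)
    (h : ∀ y, y₁ ≤ y → L (2 * y) ≤ q * L y) :
    ∀ k : ℕ, ∀ y, y₁ ≤ y → L (2 ^ k * y) ≤ q ^ k * L y := by
  intro k
  induction k with
  | zero => intro y _; simp
  | succ k ih =>
    intro y hy
    have hy0 : 0 < y := lt_of_lt_of_le one_pos (le_trans hy₁ hy)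
    have h2k : (1:ℝ) ≤ 2 ^ k := one_le_pow₀ (by norm_num)
    have hy2 : y₁ ≤ 2 ^ k * y := by nlinarith
    have e : (2:ℝ) ^ (k+1) * y = 2 * (2 ^ k * y) := by ring
    rw [e, pow_succ]
    calc L (2 * (2 ^ k * y)) ≤ q * L (2 ^ k * y) := h _ hy2
      _ ≤ q * (q ^ k * L y) := mul_le_mul_of_nonneg_left (ih y hy) hq0
      _ = q ^ k * q * L y := by ring

lemma stmt15_map_affine {m : ℝ} (hm : 0 < m) (b : ℝ) :
    Measure.map (fun x : ℝ => b + m * x) volume = ENNReal.ofReal m⁻¹ • volume := by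
  have h1 : (fun x : ℝ => b + m * x) = (fun y : ℝ => b + y) ∘ (fun x : ℝ => m * x) := rfl
  rw [h1, ← Measure.map_map (measurable_const_add b) (measurable_const_mul m),
    Real.map_volume_mul_left hm.ne', Measure.map_smul, map_add_left_eq_self,
    abs_of_pos (inv_pos.mpr hm)]

lemma stmt15_null_pre {m : ℝ} (hm : 0 < m) (b : ℝ) {N : Set ℝ} (hN : volume N = 0) :
    volume ((fun x : ℝ => b + m * x) ⁻¹' N) = 0 := by
  obtain ⟨N', hsub, hmeas, hN'⟩ := exists_measurable_superset_of_null hN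
  refine measure_mono_null (Set.preimage_mono hsub) ?_
  have hφ : Measurable (fun x : ℝ => b + m * x) := (measurable_const_mul m).const_add b
  have h2 : volume ((fun x : ℝ => b + m * x) ⁻¹' N')
      = Measure.map (fun x : ℝ => b + m * x) volume N' :=
    (Measure.map_apply hφ hmeas).symm
  rw [h2, stmt15_map_affine hm b]
  simp [hN']

lemma stmt15_lint_affine {m b : ℝ} (hm : 0 < m) {G : ℝ → ENNReal} (hG : Measurable G)
    {s : Set ℝ} (hs : MeasurableSet s) :
    ∫⁻ x in (fun x : ℝ => b + m * x) ⁻¹' s, G (b + m * x) ∂volume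
      = ENNReal.ofReal m⁻¹ * ∫⁻ y in s, G y ∂volume := by
  have hφ : Measurable (fun x : ℝ => b + m * x) := (measurable_const_mul m).const_add b
  rw [← setLIntegral_map hs hG hφ, stmt15_map_affine hm b, Measure.restrict_smul,
    lintegral_smul_measure, smul_eq_mul]

lemma stmt15_alg {T P W Q g : ℝ} (hT : T ≠ 0) (hP : P ≠ 0) (hPW : P * W = 1) :
    2 * (T * (Q * (2 * g / (P * T)))) = 4 * Q * W * g := by
  field_simp
  linear_combination (-(4:ℝ) * Q * g) * hPW

set_option maxHeartbeats 2000000 in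
/-- If `β > 1/2`, `L` is slowly varying, and `f` is a probability density on `(0,1)` with
`f(u)/((1−u)^(β−1)·L(1/(1−u))) → 1` as `u ↑ 1`, then
`I_n := ∫₀¹ n·((1 − √(1−x))/x)^n f(x) dx → 0`. -/
theorem stmt_15 (β : ℝ) (hβ : 1 / 2 < β) (L : ℝ → ℝ) (hLpos : ∀ x : ℝ, 0 < x → 0 < L x)
    (hslow : ∀ l : ℝ, 0 < l →
      Filter.Tendsto (fun x : ℝ => L (l * x) / L x) Filter.atTop (nhds 1))
    (f : ℝ → ℝ) (hf0 : ∀ u ∈ Set.Ioo (0 : ℝ) 1, 0 ≤ f u)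
    (hfint : ∫ u in Set.Ioo (0 : ℝ) 1, f u = 1)
    (hedge : Filter.Tendsto
      (fun u : ℝ => f u / ((1 - u) ^ (β - 1) * L (1 / (1 - u))))
      (nhdsWithin 1 (Set.Ioo 0 1)) (nhds 1)) :
    Filter.Tendsto
      (fun n : ℕ =>
        ∫ x in Set.Ioo (0 : ℝ) 1, (n : ℝ) * ((1 - Real.sqrt (1 - x)) / x) ^ n * f x)
      Filter.atTop (nhds 0) := by
  -- measurable nonnegative version of f
  have hfInt : IntegrableOn f (Set.Ioo 0 1) volume := integrable_of_integral_eq_one hfint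
  obtain ⟨f₀, hf₀sm, hff₀⟩ := hfInt.aestronglyMeasurable
  set F : ℝ → ℝ := (Set.Ioo (0:ℝ) 1).indicator (fun y => max (f₀ y) 0) with hFdef
  have hFmeas : Measurable F :=
    (hf₀sm.measurable.max measurable_const).indicator measurableSet_Ioo
  have hF0 : ∀ y, 0 ≤ F y := fun y => Set.indicator_nonneg (fun y _ => le_max_right _ _) y
  have hFf : ∀ᵐ y ∂(volume : Measure ℝ), y ∈ Set.Ioo (0:ℝ) 1 → F y = f y := by
    have h1 : ∀ᵐ y ∂(volume : Measure ℝ), y ∈ Set.Ioo (0:ℝ) 1 → f y = f₀ y :=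
      (ae_restrict_iff' measurableSet_Ioo).mp hff₀
    filter_upwards [h1] with y hy hmem
    rw [hFdef]
    simp only [Set.indicator_of_mem hmem]
    rw [← hy hmem, max_eq_left (hf0 y hmem)]
  -- edge bounds
  obtain ⟨ε, hεpos, hball⟩ : ∃ ε > (0:ℝ), ∀ u ∈ Set.Ioo (0:ℝ) 1, 1 - u < ε →
      (f u ≤ 2 * ((1-u)^(β-1) * L (1/(1-u))) ∧ (1-u)^(β-1) * L (1/(1-u)) ≤ 2 * f u) := by
    have h2 := Metric.tendsto_nhds.mp hedge (1/2) (by norm_num)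
    obtain ⟨ε, hε, hsub⟩ := Metric.mem_nhdsWithin_iff.mp h2
    refine ⟨ε, hε, fun u hu h1u => ?_⟩
    have hu1 : u ∈ Metric.ball (1:ℝ) ε := by
      rw [Metric.mem_ball, Real.dist_eq, abs_of_nonpos (by linarith [hu.2])]
      linarith
    have hd := hsub ⟨hu1, hu⟩
    simp only [Set.mem_setOf_eq, Real.dist_eq] at hd
    have hH : 0 < (1-u)^(β-1) * L (1/(1-u)) := by
      have h1 : (0:ℝ) < 1 - u := by linarith [hu.2]
      have := hLpos (1/(1-u)) (by positivity)
      positivity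
    have habs := abs_lt.mp hd
    constructor
    · nlinarith [(div_lt_iff₀ hH).mp (by linarith : f u / ((1-u)^(β-1) * L (1/(1-u))) < 3/2)]
    · nlinarith [(lt_div_iff₀ hH).mp (by linarith : (1:ℝ)/2 < f u / ((1-u)^(β-1) * L (1/(1-u))))]
  -- slow variation constants
  set c : ℝ := 2 ^ (β - 1/2) with hcdef
  have hc1 : (1:ℝ) < c := by
    rw [hcdef]
    rw [show (1:ℝ) < 2 ^ (β - 1/2) ↔ _ from Real.one_lt_rpow_iff_of_pos two_pos]
    exact Or.inl ⟨one_lt_two, by linarith⟩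
  have hc0 : (0:ℝ) < c := by linarith
  set q : ℝ := (1 + c)/2 with hqdef
  have hq1 : 1 < q := by rw [hqdef]; linarith
  have hq0 : (0:ℝ) < q := by linarith
  have hqc : q < c := by rw [hqdef]; linarith
  obtain ⟨y₀, hy₀⟩ := Filter.eventually_atTop.mp ((hslow 2 two_pos).eventually_lt_const hq1)
  set y₁ : ℝ := max y₀ 1 with hy₁def
  have hy₁1 : (1:ℝ) ≤ y₁ := le_max_right _ _
  have hLq : ∀ y, y₁ ≤ y → L (2*y) ≤ q * L y := by
    intro y hy
    have hy0 : 0 < y := lt_of_lt_of_le one_pos (le_trans hy₁1 hy)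
    have hLy := hLpos y hy0
    have := hy₀ y (le_trans (le_max_left _ _) hy)
    nlinarith [(div_lt_iff₀ hLy).mp this]
  have hIter := stmt15_iter L q y₁ hq0.le hy₁1 hLq
  -- the scale δ
  set δ : ℝ := min (ε/2) (min (1/y₁) (1/2)) with hδdef
  have hy₁0 : (0:ℝ) < y₁ := by linarith
  have hδpos : 0 < δ := by
    rw [hδdef]; positivity
  have hδε : δ < ε := by
    have : δ ≤ ε/2 := min_le_left _ _
    linarith
  have hδy : δ ≤ 1/y₁ := le_trans (min_le_right _ _) (min_le_left _ _)
  have hδh : δ ≤ 1/2 := le_trans (min_le_right _ _) (min_le_right _ _)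
  -- more constants
  set w : ℝ := 2 ^ (1 - β) with hwdef
  have hw0 : (0:ℝ) < w := Real.rpow_pos_of_pos two_pos _
  set ρ : ℝ := q * w * Real.sqrt 2 / 2 with hρdef
  have hsqrt2 : (0:ℝ) < Real.sqrt 2 := Real.sqrt_pos.mpr two_pos
  have hρ0 : (0:ℝ) ≤ ρ := by rw [hρdef]; positivity
  have h2c : w * Real.sqrt 2 * c = 2 := by
    rw [hwdef, hcdef, Real.sqrt_eq_rpow, ← Real.rpow_add two_pos, ← Real.rpow_add two_pos]
    rw [show (1 - β + 1/2 + (β - 1/2)) = (1:ℝ) by ring, Real.rpow_one]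
  have hρ1 : ρ < 1 := by
    have hρeq : ρ * c = q := by
      rw [hρdef]; field_simp; linear_combination h2c
    nlinarith
  set C : ℝ := 4 * Real.sqrt 2 * (Real.sqrt δ)⁻¹ with hCdef
  have hsδ : (0:ℝ) < Real.sqrt δ := Real.sqrt_pos.mpr hδpos
  have hC0 : (0:ℝ) ≤ C := by rw [hCdef]; positivity
  -- the dyadic decomposition
  set φ : ℕ → ℝ → ℝ := fun k x => (1 - 2^k) + 2^k * x with hφdef
  set B : Set ℝ := Set.Ico (1-δ) (1-δ/2) with hBdef
  set A : ℕ → Set ℝ := fun k => φ k ⁻¹' B with hAdef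
  have hφm : ∀ k, Measurable (φ k) := fun k => (measurable_const_mul _).const_add _
  have hAmeas : ∀ k, MeasurableSet (A k) := fun k => (hφm k) measurableSet_Ico
  have hBsub : B ⊆ Set.Ioo (0:ℝ) 1 := by
    intro y hy
    rw [hBdef, Set.mem_Ico] at hy
    constructor <;> [linarith [hy.1]; linarith [hy.2, hδpos]]
  -- key pointwise estimate on A k
  have hkey : ∀ k : ℕ, ∀ x, x ∈ A k →
      (f x * (Real.sqrt (1-x))⁻¹ ≤ (C * ρ^k * 2^k) * f (φ k x)) ∧
      x ∈ Set.Ioo (0:ℝ) 1 ∧ φ k x ∈ Set.Ioo (0:ℝ) 1 := by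
    intro k x hx
    have h2k1 : (1:ℝ) ≤ 2^k := one_le_pow₀ one_le_two
    have h2k0 : (0:ℝ) < 2^k := by positivity
    have hmem : φ k x ∈ Set.Ico (1-δ) (1-δ/2) := hx
    rw [Set.mem_Ico] at hmem
    set t : ℝ := 1 - x with htdef
    have hre : φ k x = 1 - 2^k * t := by rw [hφdef]; simp only []; rw [htdef]; ring
    have h1 : 2^k * t ≤ δ := by rw [hre] at hmem; linarith [hmem.1]
    have h2 : δ/2 < 2^k * t := by rw [hre] at hmem; linarith [hmem.2]
    have hpos2 : (0:ℝ) < 2^k * t := lt_trans (half_pos hδpos) h2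
    have htpos : 0 < t := by
      by_contra h
      push_neg at h
      exact absurd hpos2 (not_lt.mpr (mul_nonpos_of_nonneg_of_nonpos h2k0.le h))
    have htδ : t ≤ δ := le_trans (le_mul_of_one_le_left htpos.le h2k1) h1
    have hxI : x ∈ Set.Ioo (0:ℝ) 1 := by
      constructor <;> [linarith; linarith]
    have hφI : φ k x ∈ Set.Ioo (0:ℝ) 1 := by
      rw [hre]; constructor <;> [nlinarith; nlinarith]
    refine ⟨?_, hxI, hφI⟩
    -- edge bound at x
    have hfx := (hball x hxI (by rw [← htdef]; linarith)).1
    rw [← htdef] at hfx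
    -- slow-variation iteration
    have h2kt0 : 0 < 2^k * t := by positivity
    have hy₁le : y₁ ≤ 1/(2^k*t) := by
      rw [le_div_iff₀ h2kt0]
      nlinarith [mul_le_mul_of_nonneg_left h1 hy₁0.le,
        mul_le_mul_of_nonneg_left hδy hy₁0.le, mul_one_div_cancel hy₁0.ne']
    have hL1 : L (1/t) ≤ q^k * L (1/(2^k*t)) := by
      have h3 := hIter k (1/(2^k*t)) hy₁le
      have he : (2:ℝ)^k * (1/(2^k*t)) = 1/t := by field_simp
      rwa [he] at h3
    -- edge bound at φ k x
    have hre2 : 1 - φ k x = 2^k * t := by rw [hre]; ring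
    have hlb := (hball (φ k x) hφI (by rw [hre2]; linarith)).2
    rw [hre2] at hlb
    -- positivity facts
    have hLt : 0 < L (1/t) := hLpos _ (by positivity)
    have hLt' : 0 < L (1/(2^k*t)) := hLpos _ (by positivity)
    have hrp : (0:ℝ) < t^(β-1) := Real.rpow_pos_of_pos htpos _
    have hrp' : (0:ℝ) < ((2:ℝ)^k)^(β-1) := Real.rpow_pos_of_pos h2k0 _
    have hmulrp : ((2:ℝ)^k*t)^(β-1) = ((2:ℝ)^k)^(β-1) * t^(β-1) :=
      Real.mul_rpow h2k0.le htpos.le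
    have hfφ0 : 0 ≤ f (φ k x) := hf0 _ hφI
    have hPw : ((2:ℝ)^k)^(β-1) * w^k = 1 := by
      rw [hwdef]
      rw [show ((2:ℝ)^k)^(β-1) = (2:ℝ)^((k:ℝ)*(β-1)) by
        rw [← Real.rpow_natCast (2:ℝ) k, ← Real.rpow_mul two_pos.le]]
      rw [show ((2:ℝ)^(1-β))^k = (2:ℝ)^((1-β)*(k:ℝ)) by
        rw [← Real.rpow_natCast ((2:ℝ)^(1-β)) k, ← Real.rpow_mul two_pos.le]]
      rw [← Real.rpow_add two_pos,
        show (k:ℝ)*(β-1) + (1-β)*(k:ℝ) = 0 by ring, Real.rpow_zero]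
    have hL2 : L (1/(2^k*t)) ≤ 2 * f (φ k x) / (((2:ℝ)^k)^(β-1) * t^(β-1)) := by
      rw [le_div_iff₀ (by positivity)]
      calc L (1/(2^k*t)) * (((2:ℝ)^k)^(β-1) * t^(β-1))
          = ((2:ℝ)^k*t)^(β-1) * L (1/(2^k*t)) := by rw [hmulrp]; ring
        _ ≤ 2 * f (φ k x) := hlb
    have hstep : f x ≤ 4 * q^k * w^k * f (φ k x) := by
      have hq_k : (0:ℝ) ≤ q^k := by positivity
      have c1 : L (1/t) ≤ q^k * (2 * f (φ k x) / (((2:ℝ)^k)^(β-1) * t^(β-1))) :=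
        le_trans hL1 (mul_le_mul_of_nonneg_left hL2 hq_k)
      have c2 : f x ≤ 2 * (t^(β-1) * (q^k * (2 * f (φ k x) / (((2:ℝ)^k)^(β-1) * t^(β-1))))) := by
        refine le_trans hfx ?_
        have h4 := mul_le_mul_of_nonneg_left c1 hrp.le
        linarith
      refine le_trans c2 (le_of_eq ?_)
      exact stmt15_alg hrp.ne' hrp'.ne' hPw
    -- bound on the sqrt factor
    have hsq : (Real.sqrt t)⁻¹ ≤ Real.sqrt 2 * (Real.sqrt 2)^k * (Real.sqrt δ)⁻¹ := by
      have hd1 : δ / 2^(k+1) < t := by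
        rw [div_lt_iff₀ (by positivity : (0:ℝ) < 2^(k+1))]
        calc δ = 2 * (δ/2) := by ring
          _ < 2 * (2^k * t) := by exact mul_lt_mul_of_pos_left h2 two_pos
          _ = t * 2^(k+1) := by ring
      have hd0 : (0:ℝ) < δ / 2^(k+1) := by positivity
      have h2' : Real.sqrt (δ/2^(k+1)) ≤ Real.sqrt t := Real.sqrt_le_sqrt hd1.le
      have h3 : 0 < Real.sqrt (δ/2^(k+1)) := Real.sqrt_pos.mpr hd0
      have h4 : (Real.sqrt t)⁻¹ ≤ (Real.sqrt (δ/2^(k+1)))⁻¹ :=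
        inv_anti₀ h3 h2'
      have h5 : Real.sqrt (δ/2^(k+1)) = Real.sqrt δ / (Real.sqrt 2)^(k+1) := by
        rw [Real.sqrt_div hδpos.le, stmt15_sqrt_pow 2 (by norm_num)]
      calc (Real.sqrt t)⁻¹ ≤ (Real.sqrt δ / (Real.sqrt 2)^(k+1))⁻¹ := by rw [← h5]; exact h4
        _ = (Real.sqrt 2)^(k+1) * (Real.sqrt δ)⁻¹ := by rw [inv_div, div_eq_mul_inv]
        _ = Real.sqrt 2 * (Real.sqrt 2)^k * (Real.sqrt δ)⁻¹ := by rw [pow_succ]; ring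
    have hCe : (C * ρ^k * 2^k) * f (φ k x)
        = (4 * q^k * w^k * f (φ k x)) * (Real.sqrt 2 * (Real.sqrt 2)^k * (Real.sqrt δ)⁻¹) := by
      rw [hCdef, hρdef]
      rw [show (q * w * Real.sqrt 2 / 2)^k = q^k * w^k * (Real.sqrt 2)^k / 2^k by
        rw [div_pow, mul_pow, mul_pow]]
      field_simp
    calc f x * (Real.sqrt t)⁻¹
        ≤ (4 * q^k * w^k * f (φ k x)) * (Real.sqrt 2 * (Real.sqrt 2)^k * (Real.sqrt δ)⁻¹) := by
          apply mul_le_mul hstep hsq (by positivity) (by positivity)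
      _ = (C * ρ^k * 2^k) * f (φ k x) := hCe.symm
  -- covering
  have hcover : Set.Ioo (1-δ) 1 ⊆ ⋃ k, A k := by
    intro x hx
    rw [Set.mem_Ioo] at hx
    have ht0 : 0 < 1 - x := by linarith
    have htδ' : 1 - x < δ := by linarith
    obtain ⟨n, hn⟩ := pow_unbounded_of_one_lt (δ/(1-x)) (one_lt_two : (1:ℝ) < 2)
    have hP : ∃ m : ℕ, δ < 2^(m+1) * (1-x) := by
      refine ⟨n, ?_⟩
      have h1 : δ < 2^n * (1-x) := by
        rw [div_lt_iff₀ ht0] at hn; linarith [hn]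
      have h2 : (2:ℝ)^n * (1-x) ≤ 2^(n+1) * (1-x) := by
        have : (2:ℝ)^n ≤ 2^(n+1) := by
          apply pow_le_pow_right₀ one_le_two (Nat.le_succ n)
        nlinarith
      linarith
    classical
    set k := Nat.find hP with hkdef
    have hk : δ < 2^(k+1) * (1-x) := Nat.find_spec hP
    have hk2 : (2:ℝ)^k * (1-x) ≤ δ := by
      rcases Nat.eq_zero_or_pos k with h0 | hpos
      · simp only [h0, pow_zero, one_mul]; exact htδ'.le
      · have hmin := Nat.find_min hP (m := k - 1) (by omega)
        push_neg at hmin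
        have he : k - 1 + 1 = k := by omega
        rw [he] at hmin
        exact hmin
    refine Set.mem_iUnion.mpr ⟨k, ?_⟩
    show φ k x ∈ B
    have hφx : φ k x = 1 - 2^k * (1-x) := by simp only [hφdef]; ring
    rw [hBdef, Set.mem_Ico, hφx]
    have h3 : δ/2 < 2^k * (1-x) := by
      have he2 : (2:ℝ)^(k+1) * (1-x) = 2 * (2^k * (1-x)) := by ring
      rw [he2] at hk; linarith
    constructor
    · linarith
    · linarith
  -- total mass of F
  have hnnres : 0 ≤ᵐ[volume.restrict (Set.Ioo (0:ℝ) 1)] f :=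
    (ae_restrict_iff' measurableSet_Ioo).mpr (Filter.Eventually.of_forall hf0)
  have hIoo1 : ∫⁻ y in Set.Ioo (0:ℝ) 1, ENNReal.ofReal (F y) ∂volume = 1 := by
    have h1 : ∫⁻ y in Set.Ioo (0:ℝ) 1, ENNReal.ofReal (F y) ∂volume
        = ∫⁻ y in Set.Ioo (0:ℝ) 1, ENNReal.ofReal (f y) ∂volume := by
      apply lintegral_congr_ae
      filter_upwards [(ae_restrict_iff' measurableSet_Ioo).mpr hFf] with y hy
      rw [hy]
    rw [h1, ← ofReal_integral_eq_lintegral_ofReal hfInt hnnres, hfint]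
    simp
  -- per-piece bound
  have hGmeas : Measurable fun y => ENNReal.ofReal (F y) :=
    ENNReal.measurable_ofReal.comp hFmeas
  have hJ : ∀ k : ℕ, ∫⁻ x in A k, ENNReal.ofReal (F x * (Real.sqrt (1-x))⁻¹) ∂volume
      ≤ ENNReal.ofReal (C * ρ^k) := by
    intro k
    have h2k0 : (0:ℝ) < 2^k := by positivity
    have hKnn : (0:ℝ) ≤ C * ρ^k * 2^k := by positivity
    -- a.e. comparison
    have hpre : ∀ᵐ x ∂(volume : Measure ℝ), (φ k x ∈ Set.Ioo (0:ℝ) 1 → F (φ k x) = f (φ k x)) := by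
      have hnull : volume {y : ℝ | ¬ (y ∈ Set.Ioo (0:ℝ) 1 → F y = f y)} = 0 := hFf
      have := stmt15_null_pre h2k0 ((1:ℝ) - 2^k) hnull
      exact this
    have hae : ∀ᵐ x ∂(volume : Measure ℝ), x ∈ A k →
        F x * (Real.sqrt (1-x))⁻¹ ≤ (C * ρ^k * 2^k) * F (φ k x) := by
      filter_upwards [hFf, hpre] with x h1 h2 hxA
      obtain ⟨hb, hxI, hφI⟩ := hkey k x hxA
      rw [h1 hxI, h2 hφI]
      exact hb
    calc ∫⁻ x in A k, ENNReal.ofReal (F x * (Real.sqrt (1-x))⁻¹) ∂volume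
        ≤ ∫⁻ x in A k, ENNReal.ofReal ((C * ρ^k * 2^k) * F (φ k x)) ∂volume := by
          apply lintegral_mono_ae
          filter_upwards [(ae_restrict_iff' (hAmeas k)).mpr hae] with x hx
          exact ENNReal.ofReal_le_ofReal hx
      _ = ENNReal.ofReal (C * ρ^k * 2^k) * ∫⁻ x in A k, ENNReal.ofReal (F (φ k x)) ∂volume := by
          simp_rw [ENNReal.ofReal_mul hKnn]
          have hm2 : Measurable fun x : ℝ => ENNReal.ofReal (F (φ k x)) :=
            hGmeas.comp (hφm k)
          rw [lintegral_const_mul _ hm2]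
      _ = ENNReal.ofReal (C * ρ^k * 2^k) *
            (ENNReal.ofReal ((2^k:ℝ))⁻¹ * ∫⁻ y in B, ENNReal.ofReal (F y) ∂volume) := by
          have hsub2 : (∫⁻ x in A k, ENNReal.ofReal (F (φ k x)) ∂volume)
              = ENNReal.ofReal ((2^k:ℝ))⁻¹ * ∫⁻ y in B, ENNReal.ofReal (F y) ∂volume := by
            rw [hAdef, hBdef]
            simp only [hφdef]
            exact stmt15_lint_affine h2k0 hGmeas measurableSet_Ico
          rw [hsub2, hBdef]
      _ ≤ ENNReal.ofReal (C * ρ^k * 2^k) * (ENNReal.ofReal ((2^k:ℝ))⁻¹ * 1) := by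
          apply mul_le_mul_right
          apply mul_le_mul_right
          rw [← hIoo1]
          exact lintegral_mono_set hBsub
      _ = ENNReal.ofReal (C * ρ^k) := by
          rw [mul_one, ← ENNReal.ofReal_mul hKnn]
          congr 1
          field_simp
  -- total over (1-δ,1)
  have htot : ∫⁻ x in Set.Ioo (1-δ) 1, ENNReal.ofReal (F x * (Real.sqrt (1-x))⁻¹) ∂volume < ⊤ := by
    have h4 : (ENNReal.ofReal ρ) < 1 := ENNReal.ofReal_lt_one.mpr hρ1
    calc ∫⁻ x in Set.Ioo (1-δ) 1, ENNReal.ofReal (F x * (Real.sqrt (1-x))⁻¹) ∂volume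
        ≤ ∫⁻ x in ⋃ k, A k, ENNReal.ofReal (F x * (Real.sqrt (1-x))⁻¹) ∂volume :=
          lintegral_mono_set hcover
      _ ≤ ∑' k : ℕ, ∫⁻ x in A k, ENNReal.ofReal (F x * (Real.sqrt (1-x))⁻¹) ∂volume :=
          lintegral_iUnion_le _ _
      _ ≤ ∑' k : ℕ, ENNReal.ofReal (C * ρ^k) := ENNReal.tsum_le_tsum hJ
      _ = ENNReal.ofReal C * ∑' k : ℕ, (ENNReal.ofReal ρ)^k := by
          simp_rw [ENNReal.ofReal_mul hC0, ENNReal.ofReal_pow hρ0]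
          rw [ENNReal.tsum_mul_left]
      _ = ENNReal.ofReal C * (1 - ENNReal.ofReal ρ)⁻¹ := by rw [ENNReal.tsum_geometric]
      _ < ⊤ := ENNReal.mul_lt_top ENNReal.ofReal_lt_top
          (ENNReal.inv_lt_top.mpr (tsub_pos_of_lt h4))
  -- the piece away from 1
  have hsub3 : Set.Ioc (0:ℝ) (1-δ) ⊆ Set.Ioo (0:ℝ) 1 := fun y hy =>
    ⟨hy.1, lt_of_le_of_lt hy.2 (by linarith)⟩
  have hp1 : ∫⁻ x in Set.Ioc (0:ℝ) (1-δ), ENNReal.ofReal (F x * (Real.sqrt (1-x))⁻¹) ∂volume < ⊤ := by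
    have hb : ∀ x ∈ Set.Ioc (0:ℝ) (1-δ), F x * (Real.sqrt (1-x))⁻¹ ≤ (Real.sqrt δ)⁻¹ * F x := by
      intro x hx
      have h1 : δ ≤ 1 - x := by linarith [hx.2]
      have h2 : Real.sqrt δ ≤ Real.sqrt (1-x) := Real.sqrt_le_sqrt h1
      have h3 : (Real.sqrt (1-x))⁻¹ ≤ (Real.sqrt δ)⁻¹ := inv_anti₀ hsδ h2
      calc F x * (Real.sqrt (1-x))⁻¹ ≤ F x * (Real.sqrt δ)⁻¹ :=
            mul_le_mul_of_nonneg_left h3 (hF0 x)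
        _ = (Real.sqrt δ)⁻¹ * F x := mul_comm _ _
    calc ∫⁻ x in Set.Ioc (0:ℝ) (1-δ), ENNReal.ofReal (F x * (Real.sqrt (1-x))⁻¹) ∂volume
        ≤ ∫⁻ x in Set.Ioc (0:ℝ) (1-δ), ENNReal.ofReal ((Real.sqrt δ)⁻¹ * F x) ∂volume := by
          apply lintegral_mono_ae
          filter_upwards [(ae_restrict_iff' measurableSet_Ioc).mpr
            (Filter.Eventually.of_forall hb)] with x hx
          exact ENNReal.ofReal_le_ofReal hx
      _ = ENNReal.ofReal ((Real.sqrt δ)⁻¹) * ∫⁻ x in Set.Ioc (0:ℝ) (1-δ), ENNReal.ofReal (F x) ∂volume := by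
          simp_rw [ENNReal.ofReal_mul (inv_nonneg.mpr hsδ.le)]
          rw [lintegral_const_mul _ hGmeas]
      _ ≤ ENNReal.ofReal ((Real.sqrt δ)⁻¹) * ∫⁻ x in Set.Ioo (0:ℝ) 1, ENNReal.ofReal (F x) ∂volume :=
          mul_le_mul_right (lintegral_mono_set hsub3) _
      _ = ENNReal.ofReal ((Real.sqrt δ)⁻¹) * 1 := by rw [hIoo1]
      _ < ⊤ := by rw [mul_one]; exact ENNReal.ofReal_lt_top
  -- full finiteness
  have hDfin : ∫⁻ x in Set.Ioo (0:ℝ) 1, ENNReal.ofReal (F x * (Real.sqrt (1-x))⁻¹) ∂volume < ⊤ := by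
    have hsplit : Set.Ioo (0:ℝ) 1 ⊆ Set.Ioc 0 (1-δ) ∪ Set.Ioo (1-δ) 1 := by
      intro x hx
      by_cases h : x ≤ 1-δ
      · exact Or.inl ⟨hx.1, h⟩
      · exact Or.inr ⟨lt_of_not_ge h, hx.2⟩
    calc ∫⁻ x in Set.Ioo (0:ℝ) 1, ENNReal.ofReal (F x * (Real.sqrt (1-x))⁻¹) ∂volume
        ≤ ∫⁻ x in Set.Ioc (0:ℝ) (1-δ) ∪ Set.Ioo (1-δ) 1,
            ENNReal.ofReal (F x * (Real.sqrt (1-x))⁻¹) ∂volume := lintegral_mono_set hsplit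
      _ ≤ (∫⁻ x in Set.Ioc (0:ℝ) (1-δ), ENNReal.ofReal (F x * (Real.sqrt (1-x))⁻¹) ∂volume)
          + ∫⁻ x in Set.Ioo (1-δ) 1, ENNReal.ofReal (F x * (Real.sqrt (1-x))⁻¹) ∂volume :=
          lintegral_union_le _ _ _
      _ < ⊤ := ENNReal.add_lt_top.mpr ⟨hp1, htot⟩
  -- dominating function
  set D : ℝ → ℝ := fun x => 2 * (F x * (Real.sqrt (1-x))⁻¹) with hDdef
  have hsqm : Measurable fun x : ℝ => Real.sqrt (1-x) :=
    Real.continuous_sqrt.measurable.comp (measurable_const.sub measurable_id)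
  have hDmeas : Measurable D := (hFmeas.mul hsqm.inv).const_mul 2
  have hDnn : 0 ≤ᵐ[volume.restrict (Set.Ioo (0:ℝ) 1)] D := ae_of_all _ fun x =>
    mul_nonneg (by norm_num) (mul_nonneg (hF0 x) (inv_nonneg.mpr (Real.sqrt_nonneg _)))
  have hDint : Integrable D (volume.restrict (Set.Ioo (0:ℝ) 1)) := by
    refine ⟨hDmeas.aestronglyMeasurable, ?_⟩
    rw [hasFiniteIntegral_iff_ofReal hDnn]
    have he : ∀ x, ENNReal.ofReal (D x)
        = ENNReal.ofReal 2 * ENNReal.ofReal (F x * (Real.sqrt (1-x))⁻¹) := fun x => by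
      rw [hDdef]; exact ENNReal.ofReal_mul (by norm_num)
    simp_rw [he]
    have hm3 : Measurable fun x : ℝ => ENNReal.ofReal (F x * (Real.sqrt (1-x))⁻¹) :=
      ENNReal.measurable_ofReal.comp (hFmeas.mul hsqm.inv)
    rw [lintegral_const_mul _ hm3]
    exact ENNReal.mul_lt_top ENNReal.ofReal_lt_top hDfin
  -- dominated convergence
  have hgm : Measurable fun x : ℝ => (1 - Real.sqrt (1-x))/x :=
    (measurable_const.sub hsqm).div measurable_id
  have hFnmeas : ∀ n : ℕ, AEStronglyMeasurable
      (fun x => (n:ℝ) * ((1 - Real.sqrt (1-x))/x)^n * f x)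
      (volume.restrict (Set.Ioo (0:ℝ) 1)) := fun n =>
    (((hgm.pow_const n).const_mul _).aestronglyMeasurable).mul hfInt.aestronglyMeasurable
  have hFfres : F =ᵐ[volume.restrict (Set.Ioo (0:ℝ) 1)] f :=
    (ae_restrict_iff' measurableSet_Ioo).mpr hFf
  have hbound : ∀ n : ℕ, ∀ᵐ x ∂(volume.restrict (Set.Ioo (0:ℝ) 1)),
      ‖(n:ℝ) * ((1 - Real.sqrt (1-x))/x)^n * f x‖ ≤ D x := by
    intro n
    filter_upwards [hFfres, ae_restrict_mem measurableSet_Ioo] with x hFx hmem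
    obtain ⟨hb, hg0, hg1⟩ := stmt15_gpt hmem n
    have hfx0 : 0 ≤ f x := hf0 x hmem
    have hnn : 0 ≤ (n:ℝ) * ((1 - Real.sqrt (1-x))/x)^n * f x := by positivity
    rw [Real.norm_eq_abs, abs_of_nonneg hnn]
    calc (n:ℝ) * ((1 - Real.sqrt (1-x))/x)^n * f x
        ≤ (2 * (Real.sqrt (1-x))⁻¹) * f x := mul_le_mul_of_nonneg_right hb hfx0
      _ = D x := by rw [hDdef]; simp only []; rw [hFx]; ring
  have hlim : ∀ᵐ x ∂(volume.restrict (Set.Ioo (0:ℝ) 1)),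
      Filter.Tendsto (fun n : ℕ => (n:ℝ) * ((1 - Real.sqrt (1-x))/x)^n * f x)
        Filter.atTop (nhds 0) := by
    filter_upwards [ae_restrict_mem measurableSet_Ioo] with x hmem
    obtain ⟨_, hg0, hg1⟩ := stmt15_gpt hmem 0
    have h1 := (tendsto_self_mul_const_pow_of_lt_one hg0 hg1).mul_const (f x)
    simpa [mul_assoc] using h1
  have hfinal := tendsto_integral_of_dominated_convergence
    (μ := volume.restrict (Set.Ioo (0:ℝ) 1))
    (F := fun (n : ℕ) x => (n:ℝ) * ((1 - Real.sqrt (1-x))/x)^n * f x)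
    (f := fun _ => (0:ℝ)) D hFnmeas hDint hbound hlim
  simpa using hfinal
end

section
/- Let β > 0, let L : (0,∞) → (0,∞) be slowly varying at infinity, and let f : (0,1) → [0,∞) be a probability density on (0,1) such that f(u) / ((1−u)^{β−1} · L(1/(1−u))) → 1 as u ↑ 1. Define J_n := ∫₀¹ n · ((1 − √(1−x²))/x)^n · f(x) dx for n ∈ ℕ. Then liminf_{n→∞} J_n / (n^{1−2β} · L(n²)) ≥ 2^{1−β} · Γ(2β), where Γ denotes the Gamma function. -/
open MeasureTheory

namespace Stmt17Aux
open Filter Set Real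

noncomputable def gg (x : ℝ) : ℝ := (1 - Real.sqrt (1 - x ^ 2)) / x

lemma gg_nonneg {x : ℝ} (hx : x ∈ Set.Ioo (0:ℝ) 1) : 0 ≤ gg x := by
  apply div_nonneg _ hx.1.le
  have : Real.sqrt (1 - x ^ 2) ≤ 1 := by
    rw [Real.sqrt_le_one]; nlinarith [hx.1]
  linarith

lemma gg_le_one {x : ℝ} (hx : x ∈ Set.Ioo (0:ℝ) 1) : gg x ≤ 1 := by
  rw [gg, div_le_one hx.1]
  have h1 : (1 - x) ≤ Real.sqrt (1 - x ^ 2) := by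
    rw [show (1 : ℝ) - x ^ 2 = (1-x)*(1+x) by ring]
    have : (1 - x) = Real.sqrt ((1-x)^2) := by
      rw [Real.sqrt_sq (by linarith [hx.2])]
    rw [this]
    apply Real.sqrt_le_sqrt
    nlinarith [hx.1, hx.2, Real.sq_sqrt (show (0:ℝ) ≤ (1-x)^2 by positivity)]
  linarith

lemma gg_measurable : Measurable gg := by
  unfold gg
  fun_prop

lemma loglim {a : ℝ} {h : ℕ → ℝ} (h1 : Tendsto (fun n : ℕ => (n:ℝ) * h n) atTop (nhds a))
    (h2 : Tendsto h atTop (nhds 0)) (h3 : ∀ᶠ n in atTop, h n ≠ 0) :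
    Tendsto (fun n : ℕ => (n:ℝ) * Real.log (1 - h n)) atTop (nhds (-a)) := by
  have hd : HasDerivAt (fun y : ℝ => Real.log (1 - y)) (-1) 0 := by
    have hinner : HasDerivAt (fun y : ℝ => 1 - y) (-1) 0 := by
      exact (hasDerivAt_id' (0:ℝ)).const_sub 1
    have houter := Real.hasDerivAt_log (show (1:ℝ) - 0 ≠ 0 by norm_num)
    have := houter.comp 0 hinner
    exact this.congr_deriv (by norm_num)
  have hslope : Tendsto (slope (fun y : ℝ => Real.log (1 - y)) 0) (nhdsWithin 0 {(0:ℝ)}ᶜ)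
      (nhds (-1)) := hasDerivAt_iff_tendsto_slope.mp hd
  have hcomp : Tendsto h atTop (nhdsWithin 0 {(0:ℝ)}ᶜ) := by
    rw [tendsto_nhdsWithin_iff]
    exact ⟨h2, h3⟩
  have hratio : Tendsto (fun n => Real.log (1 - h n) / h n) atTop (nhds (-1)) := by
    have := hslope.comp hcomp
    apply this.congr'
    filter_upwards [h3] with n hn
    simp [slope, hn, Real.log_one, div_eq_inv_mul]
  have := h1.mul hratio
  rw [show a * (-1) = -a by ring] at this
  apply this.congr'
  filter_upwards [h3] with n hn
  field_simp

noncomputable def sn (t : ℝ) (n : ℕ) : ℝ := t^2/(2*(n:ℝ)^2)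

lemma hn2top : Tendsto (fun n : ℕ => ((n:ℝ))^2) atTop atTop :=
  (tendsto_pow_atTop two_ne_zero).comp tendsto_natCast_atTop_atTop

lemma sn_lim (t : ℝ) : Tendsto (sn t) atTop (nhds 0) := by
  apply Tendsto.div_atTop (tendsto_const_nhds (x := t^2))
  exact hn2top.const_mul_atTop (by norm_num)

lemma nsn_lim (t : ℝ) : Tendsto (fun n : ℕ => (n:ℝ) * sn t n) atTop (nhds 0) := by
  have h : Tendsto (fun n : ℕ => t^2/(2*(n:ℝ))) atTop (nhds 0) := by
    apply Tendsto.div_atTop (tendsto_const_nhds (x := t^2))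
    exact tendsto_natCast_atTop_atTop.const_mul_atTop (by norm_num)
  apply h.congr'
  filter_upwards [eventually_ge_atTop 1] with n hn
  have hn0 : (n:ℝ) ≠ 0 := by positivity
  unfold sn; field_simp

lemma sn_mem {t : ℝ} (ht : 0 < t) : ∀ᶠ n : ℕ in atTop, 0 < sn t n ∧ sn t n < 1/2 := by
  filter_upwards [tendsto_natCast_atTop_atTop.eventually_gt_atTop t,
    eventually_ge_atTop 1] with n hn hn1
  have hn0 : (0:ℝ) < (n:ℝ) := lt_trans ht hn
  constructor
  · unfold sn; positivity
  · unfold sn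
    rw [div_lt_iff₀ (by positivity)]
    nlinarith

noncomputable def cn (t : ℝ) (n : ℕ) : ℝ := Real.sqrt (sn t n * (2 - sn t n))

lemma ncn_lim {t : ℝ} (ht : 0 < t) :
    Tendsto (fun n : ℕ => (n:ℝ) * cn t n) atTop (nhds t) := by
  have h1 : Tendsto (fun n : ℕ => (t^2/2) * (2 - sn t n)) atTop (nhds ((t^2/2) * (2 - 0))) :=
    (tendsto_const_nhds (x := t^2/2)).mul
      ((tendsto_const_nhds (x := (2:ℝ))).sub (sn_lim t))
  rw [show (t^2/2) * ((2:ℝ) - 0) = t^2 by ring] at h1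
  have h2 : Tendsto (fun n : ℕ => Real.sqrt ((t^2/2) * (2 - sn t n))) atTop (nhds t) := by
    have := (Real.continuous_sqrt.continuousAt (x := t^2)).tendsto.comp h1
    rwa [Real.sqrt_sq ht.le] at this
  apply h2.congr'
  filter_upwards [eventually_ge_atTop 1] with n hn
  have hn0 : (0:ℝ) < (n:ℝ) := by exact_mod_cast hn
  rw [show (t^2/2) * (2 - sn t n) = (n:ℝ)^2 * (sn t n * (2 - sn t n)) by
    unfold sn; field_simp]
  rw [Real.sqrt_mul (by positivity), Real.sqrt_sq hn0.le, cn]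

lemma cn_lim {t : ℝ} (ht : 0 < t) : Tendsto (cn t) atTop (nhds 0) := by
  have h1 : Tendsto (fun n : ℕ => sn t n * (2 - sn t n)) atTop (nhds 0) := by
    have := (sn_lim t).mul ((tendsto_const_nhds (x := (2:ℝ))).sub (sn_lim t))
    simpa using this
  have := (Real.continuous_sqrt.continuousAt (x := 0)).tendsto.comp h1
  rw [Real.sqrt_zero] at this
  exact this

lemma gg_eq {s : ℝ} (hs : 0 < s) (hs2 : s < 1/2) :
    gg (1 - s) = (1 - Real.sqrt (s * (2 - s))) / (1 - s) := by
  unfold gg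
  congr 2
  ring

lemma r3lim {t : ℝ} (ht : 0 < t) :
    Tendsto (fun n : ℕ => gg (1 - sn t n) ^ n) atTop (nhds (Real.exp (-t))) := by
  have hcpos : ∀ᶠ n : ℕ in atTop, 0 < cn t n := by
    filter_upwards [sn_mem ht] with n ⟨h1, h2⟩
    apply Real.sqrt_pos.mpr; nlinarith
  have hclt : ∀ᶠ n : ℕ in atTop, cn t n < 1 := by
    filter_upwards [(cn_lim ht).eventually (eventually_lt_nhds (by norm_num : (0:ℝ) < 1))] with n h
    exact h
  have hlog1 : Tendsto (fun n : ℕ => (n:ℝ) * Real.log (1 - cn t n)) atTop (nhds (-t)) :=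
    loglim (ncn_lim ht) (cn_lim ht) (by filter_upwards [hcpos] with n h; exact ne_of_gt h)
  have hlog2 : Tendsto (fun n : ℕ => (n:ℝ) * Real.log (1 - sn t n)) atTop (nhds 0) := by
    have := loglim (a := 0) (by simpa using nsn_lim t) (sn_lim t)
      (by filter_upwards [sn_mem ht] with n h; exact ne_of_gt h.1)
    simpa using this
  have hlogg : Tendsto (fun n : ℕ => (n:ℝ) * Real.log (gg (1 - sn t n))) atTop (nhds (-t)) := by
    have := hlog1.sub hlog2
    rw [sub_zero] at this
    apply this.congr'
    filter_upwards [sn_mem ht, hcpos, hclt] with n ⟨hs1, hs2⟩ hc1 hc2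
    rw [gg_eq hs1 hs2, Real.log_div (by simp [cn] at hc2 ⊢; linarith) (by linarith), cn]
    ring
  have hgpos : ∀ᶠ n : ℕ in atTop, 0 < gg (1 - sn t n) := by
    filter_upwards [sn_mem ht, hclt] with n ⟨hs1, hs2⟩ hc2
    rw [gg_eq hs1 hs2]
    apply div_pos _ (by linarith)
    simp only [cn] at hc2
    linarith
  have := (Real.continuous_exp.continuousAt.tendsto).comp hlogg
  apply this.congr'
  filter_upwards [hgpos] with n hg
  simp only [Function.comp_apply]
  rw [← Real.log_pow, Real.exp_log (pow_pos hg n)]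


lemma hP {β t : ℝ} (ht : 0 < t) {n : ℕ} (hn1 : 1 ≤ n) :
    (sn t n) ^ (β - 1) = 2^((1:ℝ)-β) * t^(2*β-2) * ((n:ℝ))^(2-2*β) := by
  have hnn : (0:ℝ) < (n:ℝ) := by exact_mod_cast hn1
  have e0 : sn t n = t^2/(2*(n:ℝ)^2) := rfl
  rw [e0, Real.div_rpow (by positivity) (by positivity)]
  have e1 : (t^2 : ℝ) ^ (β-1) = t^(2*β-2) := by
    rw [← Real.rpow_natCast t 2, ← Real.rpow_mul ht.le]
    rw [show ((2:ℕ):ℝ)*(β-1) = 2*β-2 by push_cast; ring]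
  have e2 : ((2:ℝ)*(n:ℝ)^2) ^ (β-1) = 2^(β-1) * ((n:ℝ))^(2*β-2) := by
    rw [Real.mul_rpow (by norm_num) (by positivity)]
    congr 1
    rw [← Real.rpow_natCast (n:ℝ) 2, ← Real.rpow_mul hnn.le]
    rw [show ((2:ℕ):ℝ)*(β-1) = 2*β-2 by push_cast; ring]
  rw [e1, e2]
  rw [show (1:ℝ)-β = -(β-1) by ring, Real.rpow_neg (by norm_num : (0:ℝ) ≤ 2)]
  rw [show (2:ℝ)-2*β = -(2*β-2) by ring, Real.rpow_neg hnn.le]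
  have h2 : ((2:ℝ))^(β-1) ≠ 0 := by positivity
  have h3 : ((n:ℝ))^(2*β-2) ≠ 0 := by positivity
  field_simp

lemma keyid (β : ℝ) (L f : ℝ → ℝ) (hLpos : ∀ x : ℝ, 0 < x → 0 < L x)
    {t : ℝ} (ht : 0 < t) {n : ℕ} (hn1 : 1 ≤ n) :
    t/(n:ℝ)^2 * ((n:ℝ) * gg (1 - sn t n) ^ n * f (1 - sn t n)) *
      ((n:ℝ)^((1:ℝ)-2*β) * L ((n:ℝ)^2))⁻¹
    = (2^((1:ℝ)-β) * t^(2*β-1)) *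
      (f (1 - sn t n) / ((1 - (1 - sn t n))^(β-1) * L (1/(1 - (1 - sn t n))))) *
      (L (2/t^2 * (n:ℝ)^2) / L ((n:ℝ)^2)) * gg (1 - sn t n) ^ n := by
  have hnn : (0:ℝ) < (n:ℝ) := by exact_mod_cast hn1
  have hspos : 0 < sn t n := by unfold sn; positivity
  have harg : 1/(sn t n) = 2/t^2 * (n:ℝ)^2 := by
    unfold sn; field_simp
  rw [sub_sub_cancel, harg, hP ht hn1]
  have hQ : 0 < L (2/t^2 * (n:ℝ)^2) := hLpos _ (by positivity)
  have hR : 0 < L ((n:ℝ)^2) := hLpos _ (by positivity)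
  rw [show (2:ℝ)-2*β = 1+((1:ℝ)-2*β) by ring, Real.rpow_add hnn, Real.rpow_one]
  rw [show 2*β-1 = (2*β-2)+1 by ring, Real.rpow_add_one (ne_of_gt ht)]
  have hX : ((n:ℝ))^((1:ℝ)-2*β) ≠ 0 := by positivity
  have hY : t^(2*β-2) ≠ 0 := by positivity
  have hc : ((2:ℝ))^((1:ℝ)-β) ≠ 0 := by positivity
  set A := gg (1 - sn t n) ^ n with hA
  set F := f (1 - sn t n) with hF
  set Q := L (2/t^2 * (n:ℝ)^2) with hQ'
  set R := L ((n:ℝ)^2) with hR'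
  set X := (n:ℝ)^((1:ℝ)-2*β) with hX'
  set Y := t^(2*β-2) with hY'
  set c := (2:ℝ)^((1:ℝ)-β) with hc'
  field_simp

lemma ptwise (β : ℝ) (L : ℝ → ℝ) (hLpos : ∀ x : ℝ, 0 < x → 0 < L x)
    (hslow : ∀ l : ℝ, 0 < l →
      Filter.Tendsto (fun x : ℝ => L (l * x) / L x) Filter.atTop (nhds 1))
    (f : ℝ → ℝ)
    (hedge : Filter.Tendsto
      (fun u : ℝ => f u / ((1 - u) ^ (β - 1) * L (1 / (1 - u))))
      (nhdsWithin 1 (Set.Ioo 0 1)) (nhds 1))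
    {t : ℝ} (ht : 0 < t) :
    Tendsto (fun n : ℕ => t/(n:ℝ)^2 * ((n:ℝ) * gg (1 - sn t n) ^ n * f (1 - sn t n)) *
      ((n:ℝ)^((1:ℝ)-2*β) * L ((n:ℝ)^2))⁻¹) atTop
      (nhds (2^((1:ℝ)-β) * t^(2*β-1) * Real.exp (-t))) := by
  have htend : Tendsto (fun n : ℕ => 1 - sn t n) atTop (nhdsWithin 1 (Set.Ioo 0 1)) := by
    rw [tendsto_nhdsWithin_iff]
    constructor
    · have := (tendsto_const_nhds (x := (1:ℝ))).sub (sn_lim t)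
      simpa using this
    · filter_upwards [sn_mem ht] with n ⟨h1, h2⟩
      constructor <;> [linarith; linarith]
  have r1 : Tendsto (fun n : ℕ =>
      f (1 - sn t n) / ((1 - (1 - sn t n))^(β-1) * L (1/(1 - (1 - sn t n)))))
      atTop (nhds 1) := hedge.comp htend
  have r2 : Tendsto (fun n : ℕ => L (2/t^2 * (n:ℝ)^2) / L ((n:ℝ)^2)) atTop (nhds 1) :=
    (hslow (2/t^2) (by positivity)).comp hn2top
  have := (((tendsto_const_nhds (x := 2^((1:ℝ)-β) * t^(2*β-1))).mul r1).mul r2).mul (r3lim ht)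
  rw [show 2^((1:ℝ)-β) * t^(2*β-1) * 1 * 1 * Real.exp (-t)
      = 2^((1:ℝ)-β) * t^(2*β-1) * Real.exp (-t) by ring] at this
  apply this.congr'
  filter_upwards [eventually_ge_atTop 1] with n hn
  exact (keyid β L f hLpos ht hn).symm


lemma lint_cov {s : Set ℝ} {F F' : ℝ → ℝ}
    (hs : MeasurableSet s) (hF' : ∀ x ∈ s, HasDerivWithinAt F (F' x) s x) (hF : Set.InjOn F s)
    (g : ℝ → ENNReal) :
    ∫⁻ x in F '' s, g x = ∫⁻ x in s, ENNReal.ofReal |F' x| * g (F x) := by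
  simpa only [ContinuousLinearMap.det_toSpanSingleton] using
    MeasureTheory.lintegral_image_eq_lintegral_abs_det_fderiv_mul volume hs
      (fun x hx => (hF' x hx).hasFDerivWithinAt) hF g

lemma phi_measurable (n : ℕ) : Measurable (fun t : ℝ => 1 - sn t n) := by
  unfold sn; fun_prop

lemma phi_hasDeriv {n : ℕ} (hn1 : 1 ≤ n) (t : ℝ) :
    HasDerivAt (fun t : ℝ => 1 - sn t n) (-(t/(n:ℝ)^2)) t := by
  have hnn : (0:ℝ) < (n:ℝ) := by exact_mod_cast hn1
  have h1 : HasDerivAt (fun t : ℝ => 1 - t^2/(2*(n:ℝ)^2)) (0 - (2*t^(2-1))/(2*(n:ℝ)^2)) t :=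
    (hasDerivAt_const t 1).sub ((hasDerivAt_pow 2 t).div_const (2*(n:ℝ)^2))
  have : (0 : ℝ) - (2*t^(2-1))/(2*(n:ℝ)^2) = -(t/(n:ℝ)^2) := by
    field_simp
    ring
  rw [this] at h1
  exact h1

lemma phi_injOn {n : ℕ} (hn1 : 1 ≤ n) :
    Set.InjOn (fun t : ℝ => 1 - sn t n) (Set.Ioo 0 (n:ℝ)) := by
  have hnn : (0:ℝ) < (n:ℝ) := by exact_mod_cast hn1
  intro a ha b hb hab
  simp only [sn] at hab
  have h2 : a^2 = b^2 := by
    field_simp at hab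
    linarith
  exact (sq_eq_sq₀ ha.1.le hb.1.le).mp h2

lemma phi_mem {n : ℕ} (hn1 : 1 ≤ n) {t : ℝ} (ht : t ∈ Set.Ioo 0 (n:ℝ)) :
    (1 - sn t n) ∈ Set.Ioo (0:ℝ) 1 := by
  have hnn : (0:ℝ) < (n:ℝ) := by exact_mod_cast hn1
  have h1 : 0 < sn t n := by
    have ht1 := ht.1
    unfold sn; positivity
  have h2 : sn t n < 1/2 := by
    unfold sn
    rw [div_lt_iff₀ (by positivity)]
    nlinarith [ht.1, ht.2]
  constructor <;> [linarith; linarith]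

lemma f_integrableOn {f : ℝ → ℝ} (hfint : ∫ u in Set.Ioo (0 : ℝ) 1, f u = 1) :
    IntegrableOn f (Set.Ioo (0:ℝ) 1) := by
  by_contra h
  rw [MeasureTheory.integral_undef h] at hfint
  exact one_ne_zero hfint.symm

lemma J_integrableOn {f : ℝ → ℝ} (hf0 : ∀ u ∈ Set.Ioo (0 : ℝ) 1, 0 ≤ f u)
    (hfint : ∫ u in Set.Ioo (0 : ℝ) 1, f u = 1) (n : ℕ) :
    IntegrableOn (fun x => (n:ℝ) * gg x ^ n * f x) (Set.Ioo (0:ℝ) 1) := by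
  have hfInt := f_integrableOn hfint
  apply Integrable.mono' (hfInt.const_mul (n:ℝ))
  · exact ((measurable_const.mul (gg_measurable.pow_const n)).aestronglyMeasurable).mul
      hfInt.aestronglyMeasurable
  · filter_upwards [ae_restrict_mem measurableSet_Ioo] with x hx
    have h1 : 0 ≤ gg x := gg_nonneg hx
    have h2 : gg x ^ n ≤ 1 := pow_le_one₀ h1 (gg_le_one hx)
    have h3 : 0 ≤ f x := hf0 x hx
    rw [Real.norm_eq_abs, abs_of_nonneg (by positivity)]
    calc (n:ℝ) * gg x ^ n * f x ≤ (n:ℝ) * 1 * f x := by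
          apply mul_le_mul_of_nonneg_right _ h3
          exact mul_le_mul_of_nonneg_left h2 (by positivity)
      _ = (n:ℝ) * f x := by ring

lemma aemeas_comp {f : ℝ → ℝ} (hfInt : IntegrableOn f (Set.Ioo (0:ℝ) 1)) {n : ℕ}
    (hn1 : 1 ≤ n) :
    AEMeasurable (fun t : ℝ => f (1 - sn t n)) (volume.restrict (Set.Ioo 0 (n:ℝ))) := by
  have hnn : (0:ℝ) < (n:ℝ) := by exact_mod_cast hn1
  have hsm := hfInt.aestronglyMeasurable
  set ftil := hsm.mk f with hftil
  have hmeas : StronglyMeasurable ftil := hsm.stronglyMeasurable_mk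
  have hae : f =ᵐ[volume.restrict (Set.Ioo (0:ℝ) 1)] ftil := hsm.ae_eq_mk
  set A : Set ℝ := {x | f x ≠ ftil x} with hA
  have hA0 : volume.restrict (Set.Ioo (0:ℝ) 1) A = 0 := hae
  set N : Set ℝ := toMeasurable (volume.restrict (Set.Ioo (0:ℝ) 1)) A with hN
  have hNmeas : MeasurableSet N := measurableSet_toMeasurable _ _
  have hNsub : A ⊆ N := subset_toMeasurable _ _
  have hN0 : volume.restrict (Set.Ioo (0:ℝ) 1) N = 0 := by
    rw [measure_toMeasurable]; exact hA0
  set N' : Set ℝ := N ∩ Set.Ioo (0:ℝ) 1 with hN'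
  have hN'meas : MeasurableSet N' := hNmeas.inter measurableSet_Ioo
  have hN'0 : volume N' = 0 := by
    rw [← Measure.restrict_apply hNmeas]; exact hN0
  -- change of variables to show the preimage is null
  have hcov := lint_cov (measurableSet_Ioo (a := (0:ℝ)) (b := (n:ℝ)))
    (fun t _ => ((phi_hasDeriv hn1 t).hasDerivWithinAt))
    (phi_injOn hn1) (N'.indicator (fun _ => (1:ENNReal)))
  have hzero : ∫⁻ t in Set.Ioo 0 (n:ℝ),
      ENNReal.ofReal |(-(t/(n:ℝ)^2))| * N'.indicator (fun _ => (1:ENNReal)) (1 - sn t n) = 0 := by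
    rw [← hcov]
    have hle : ∫⁻ x in (fun t : ℝ => 1 - sn t n) '' Set.Ioo 0 (n:ℝ),
        N'.indicator (fun _ => (1:ENNReal)) x ≤ volume N' := by
      rw [MeasureTheory.lintegral_indicator hN'meas, MeasureTheory.setLIntegral_one,
        Measure.restrict_apply hN'meas]
      exact measure_mono Set.inter_subset_left
    exact le_antisymm (le_trans hle (le_of_eq hN'0)) zero_le
  have hFmeas : Measurable (fun t : ℝ =>
      ENNReal.ofReal |(-(t/(n:ℝ)^2))| * N'.indicator (fun _ => (1:ENNReal)) (1 - sn t n)) := by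
    apply Measurable.mul
    · fun_prop
    · exact (measurable_const.indicator hN'meas).comp (phi_measurable n)
  have hae2 := (MeasureTheory.lintegral_eq_zero_iff hFmeas).mp hzero
  have heq : (fun t : ℝ => f (1 - sn t n)) =ᵐ[volume.restrict (Set.Ioo 0 (n:ℝ))]
      (fun t : ℝ => ftil (1 - sn t n)) := by
    filter_upwards [hae2, ae_restrict_mem (measurableSet_Ioo (a := (0:ℝ)) (b := (n:ℝ)))]
      with t h1 h2
    have hpos : (0:ENNReal) < ENNReal.ofReal |(-(t/(n:ℝ)^2))| := by
      rw [ENNReal.ofReal_pos, abs_pos, neg_ne_zero]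
      have ht1 := h2.1
      positivity
    have hind : N'.indicator (fun _ => (1:ENNReal)) (1 - sn t n) = 0 := by
      rcases mul_eq_zero.mp h1 with h | h
      · exact absurd h (ne_of_gt hpos)
      · exact h
    have hnotin : (1 - sn t n) ∉ N' := by
      intro hmem
      rw [Set.indicator_of_mem hmem] at hind
      exact one_ne_zero hind
    by_contra hne
    exact hnotin ⟨hNsub hne, phi_mem hn1 h2⟩
  exact ((hmeas.measurable.comp (phi_measurable n)).aemeasurable).congr heq.symm


end Stmt17Aux

open Stmt17Aux Filter Set Real

/-- If `β > 0`, `L` is slowly varying, and `f` is a probability density on `(0,1)` with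
`f(u)/((1−u)^(β−1)·L(1/(1−u))) → 1` as `u ↑ 1`, then with
`J_n := ∫₀¹ n·((1 − √(1−x²))/x)^n f(x) dx` one has
`liminf J_n / (n^(1−2β)·L(n²)) ≥ 2^(1−β)·Γ(2β)`. -/
theorem stmt_17 (β : ℝ) (hβ : 0 < β) (L : ℝ → ℝ) (hLpos : ∀ x : ℝ, 0 < x → 0 < L x)
    (hslow : ∀ l : ℝ, 0 < l →
      Filter.Tendsto (fun x : ℝ => L (l * x) / L x) Filter.atTop (nhds 1))
    (f : ℝ → ℝ) (hf0 : ∀ u ∈ Set.Ioo (0 : ℝ) 1, 0 ≤ f u)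
    (hfint : ∫ u in Set.Ioo (0 : ℝ) 1, f u = 1)
    (hedge : Filter.Tendsto
      (fun u : ℝ => f u / ((1 - u) ^ (β - 1) * L (1 / (1 - u))))
      (nhdsWithin 1 (Set.Ioo 0 1)) (nhds 1)) :
    (((2 : ℝ) ^ (1 - β) * Real.Gamma (2 * β) : ℝ) : EReal) ≤
      Filter.liminf
        (fun n : ℕ =>
          (((∫ x in Set.Ioo (0 : ℝ) 1,
              (n : ℝ) * ((1 - Real.sqrt (1 - x ^ 2)) / x) ^ n * f x) /
            ((n : ℝ) ^ ((1 : ℝ) - 2 * β) * L ((n : ℝ) ^ 2)) : ℝ) : EReal))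
        Filter.atTop := by
  have h2β : 0 < 2 * β := by linarith
  set C : ℝ := (2 : ℝ) ^ (1 - β) * Real.Gamma (2 * β) with hCdef
  have hC : 0 < C := mul_pos (Real.rpow_pos_of_pos two_pos _) (Real.Gamma_pos_of_pos h2β)
  have hfInt : IntegrableOn f (Set.Ioo (0:ℝ) 1) := f_integrableOn hfint
  set J : ℕ → ℝ := fun n => ∫ x in Set.Ioo (0 : ℝ) 1,
      (n : ℝ) * ((1 - Real.sqrt (1 - x ^ 2)) / x) ^ n * f x with hJdef
  set D : ℕ → ℝ := fun n => (n : ℝ) ^ ((1 : ℝ) - 2 * β) * L ((n : ℝ) ^ 2) with hDdef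
  have hJeq : ∀ n : ℕ, J n = ∫ x in Set.Ioo (0 : ℝ) 1, (n : ℝ) * gg x ^ n * f x := fun n => rfl
  have hJnn : ∀ n : ℕ, 0 ≤ J n := by
    intro n
    rw [hJeq n]
    apply MeasureTheory.integral_nonneg_of_ae
    filter_upwards [ae_restrict_mem measurableSet_Ioo] with x hx
    have := gg_nonneg hx
    have := hf0 x hx
    positivity
  have hDpos : ∀ n : ℕ, 1 ≤ n → 0 < D n := by
    intro n hn
    have hnn : (0:ℝ) < (n:ℝ) := by exact_mod_cast hn
    exact mul_pos (Real.rpow_pos_of_pos hnn _) (hLpos _ (by positivity))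
  set Φ : ℕ → ℝ → ENNReal := fun n => (Set.Ioo (0:ℝ) (n:ℝ)).indicator
    (fun t => ENNReal.ofReal (t/(n:ℝ)^2 * ((n:ℝ) * gg (1 - sn t n) ^ n * f (1 - sn t n)) *
      ((n:ℝ)^((1:ℝ)-2*β) * L ((n:ℝ)^2))⁻¹)) with hΦdef
  -- a.e. measurability
  have hΦmeas : ∀ n : ℕ, AEMeasurable (Φ n) volume := by
    intro n
    rcases Nat.eq_zero_or_pos n with h0 | hn1
    · subst h0
      have : Φ 0 = fun _ => 0 := by
        funext t
        simp [hΦdef]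
      rw [this]
      exact aemeasurable_const
    · rw [hΦdef]
      rw [aemeasurable_indicator_iff measurableSet_Ioo]
      apply ENNReal.measurable_ofReal.comp_aemeasurable
      apply AEMeasurable.mul_const
      apply AEMeasurable.mul
      · exact (measurable_id.div_const _).aemeasurable
      · apply AEMeasurable.mul
        · exact (measurable_const.mul
            ((gg_measurable.comp (phi_measurable n)).pow_const n)).aemeasurable
        · exact aemeas_comp hfInt hn1
  -- integral bound
  have hbound : ∀ n : ℕ, 1 ≤ n → ∫⁻ t, Φ n t ≤ ENNReal.ofReal (J n / D n) := by
    intro n hn1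
    have hnn : (0:ℝ) < (n:ℝ) := by exact_mod_cast hn1
    rw [hΦdef]
    simp only
    rw [MeasureTheory.lintegral_indicator measurableSet_Ioo]
    have hstep1 : ∫⁻ t in Set.Ioo (0:ℝ) (n:ℝ),
        ENNReal.ofReal (t/(n:ℝ)^2 * ((n:ℝ) * gg (1 - sn t n) ^ n * f (1 - sn t n)) *
          ((n:ℝ)^((1:ℝ)-2*β) * L ((n:ℝ)^2))⁻¹)
        = ∫⁻ t in Set.Ioo (0:ℝ) (n:ℝ),
          (ENNReal.ofReal |(-(t/(n:ℝ)^2))| *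
            ENNReal.ofReal ((n:ℝ) * gg (1 - sn t n) ^ n * f (1 - sn t n))) *
            ENNReal.ofReal (((n:ℝ)^((1:ℝ)-2*β) * L ((n:ℝ)^2))⁻¹) := by
      apply MeasureTheory.setLIntegral_congr_fun measurableSet_Ioo
      intro t ht
      have h1 : (0:ℝ) ≤ t/(n:ℝ)^2 := by
        have := ht.1
        positivity
      have hmem := phi_mem hn1 ht
      have h2 : (0:ℝ) ≤ (n:ℝ) * gg (1 - sn t n) ^ n * f (1 - sn t n) := by
        have := gg_nonneg hmem
        have := hf0 _ hmem
        positivity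
      dsimp only
      rw [ENNReal.ofReal_mul (mul_nonneg h1 h2), ENNReal.ofReal_mul h1,
        abs_neg, abs_of_nonneg h1]
    rw [hstep1]
    rw [MeasureTheory.lintegral_mul_const' _ _ ENNReal.ofReal_ne_top]
    have hcov := lint_cov (measurableSet_Ioo (a := (0:ℝ)) (b := (n:ℝ)))
      (fun t _ => (phi_hasDeriv hn1 t).hasDerivWithinAt) (phi_injOn hn1)
      (fun x => ENNReal.ofReal ((n:ℝ) * gg x ^ n * f x))
    rw [← hcov]
    have hsub : (fun t : ℝ => 1 - sn t n) '' Set.Ioo 0 (n:ℝ) ⊆ Set.Ioo (0:ℝ) 1 :=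
      Set.image_subset_iff.mpr (fun t ht => phi_mem hn1 ht)
    have hmono := MeasureTheory.lintegral_mono_set (μ := volume)
      (f := fun x => ENNReal.ofReal ((n:ℝ) * gg x ^ n * f x)) hsub
    have hJof : ∫⁻ x in Set.Ioo (0:ℝ) 1, ENNReal.ofReal ((n:ℝ) * gg x ^ n * f x)
        = ENNReal.ofReal (J n) := by
      rw [hJeq n]
      refine (MeasureTheory.ofReal_integral_eq_lintegral_ofReal
        (J_integrableOn hf0 hfint n) ?_).symm
      filter_upwards [ae_restrict_mem measurableSet_Ioo] with x hx
      have := gg_nonneg hx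
      have := hf0 x hx
      positivity
    calc (∫⁻ x in (fun t : ℝ => 1 - sn t n) '' Set.Ioo 0 (n:ℝ),
          ENNReal.ofReal ((n:ℝ) * gg x ^ n * f x)) *
          ENNReal.ofReal (((n:ℝ)^((1:ℝ)-2*β) * L ((n:ℝ)^2))⁻¹)
        ≤ (∫⁻ x in Set.Ioo (0:ℝ) 1, ENNReal.ofReal ((n:ℝ) * gg x ^ n * f x)) *
          ENNReal.ofReal (((n:ℝ)^((1:ℝ)-2*β) * L ((n:ℝ)^2))⁻¹) := by
          exact mul_le_mul_left hmono _
      _ = ENNReal.ofReal (J n / D n) := by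
          rw [hJof, ← ENNReal.ofReal_mul (hJnn n), div_eq_mul_inv]
  -- pointwise limits
  have hptw : ∀ t : ℝ, t ∈ Set.Ioi (0:ℝ) → Tendsto (fun n : ℕ => Φ n t) atTop
      (nhds (ENNReal.ofReal (2^((1:ℝ)-β) * t^(2*β-1) * Real.exp (-t)))) := by
    intro t ht
    have h1 := ptwise β L hLpos hslow f hedge ht
    have h2 := (ENNReal.continuous_ofReal.tendsto _).comp h1
    apply h2.congr'
    filter_upwards [eventually_ge_atTop 1, tendsto_natCast_atTop_atTop.eventually_gt_atTop t]
      with n hn1 hnt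
    rw [hΦdef]
    simp only [Function.comp_apply]
    rw [Set.indicator_of_mem (Set.mem_Ioo.mpr ⟨ht, hnt⟩)]
  -- Fatou
  have fatou := MeasureTheory.lintegral_liminf_le' (μ := volume) (u := atTop) hΦmeas
  have hlower : ENNReal.ofReal C ≤ ∫⁻ t, Filter.liminf (fun n => Φ n t) Filter.atTop := by
    have hBint : IntegrableOn (fun t : ℝ => 2^((1:ℝ)-β) * t^(2*β-1) * Real.exp (-t))
        (Set.Ioi (0:ℝ)) := by
      apply (((Real.GammaIntegral_convergent h2β).const_mul ((2:ℝ)^((1:ℝ)-β)))).congr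
      apply ae_of_all
      intro t
      ring
    have hBnn : 0 ≤ᵐ[volume.restrict (Set.Ioi (0:ℝ))]
        (fun t : ℝ => 2^((1:ℝ)-β) * t^(2*β-1) * Real.exp (-t)) := by
      filter_upwards [ae_restrict_mem measurableSet_Ioi] with t ht
      have : (0:ℝ) < t := ht
      positivity
    have hBval : ∫ t in Set.Ioi (0:ℝ), 2^((1:ℝ)-β) * t^(2*β-1) * Real.exp (-t) = C := by
      rw [hCdef, Real.Gamma_eq_integral h2β, ← MeasureTheory.integral_const_mul]
      apply MeasureTheory.integral_congr_ae
      apply ae_of_all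
      intro t
      ring
    have key : ENNReal.ofReal C = ∫⁻ t in Set.Ioi (0:ℝ),
        ENNReal.ofReal (2^((1:ℝ)-β) * t^(2*β-1) * Real.exp (-t)) := by
      rw [← hBval]
      exact MeasureTheory.ofReal_integral_eq_lintegral_ofReal hBint hBnn
    rw [key, ← MeasureTheory.lintegral_indicator measurableSet_Ioi]
    apply MeasureTheory.lintegral_mono
    intro t
    dsimp only
    by_cases ht : t ∈ Set.Ioi (0:ℝ)
    · rw [Set.indicator_of_mem ht, (hptw t ht).liminf_eq]
    · rw [Set.indicator_of_notMem ht]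
      exact zero_le
  have hliminf : ENNReal.ofReal C ≤ Filter.liminf
      (fun n : ℕ => ENNReal.ofReal (J n / D n)) Filter.atTop := by
    refine le_trans hlower (le_trans fatou ?_)
    refine Filter.liminf_le_liminf ?_
    filter_upwards [eventually_ge_atTop 1] with n hn1
    exact hbound n hn1
  -- transfer to EReal
  by_contra hcon
  push_neg at hcon
  obtain ⟨c, hc1, hc2⟩ := EReal.lt_iff_exists_real_btwn.mp hcon
  have hcC : c < C := by exact_mod_cast hc2
  have h3 : ENNReal.ofReal c < ENNReal.ofReal C := (ENNReal.ofReal_lt_ofReal_iff hC).mpr hcC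
  have h4 := Filter.eventually_lt_of_lt_liminf (lt_of_lt_of_le h3 hliminf)
  have h5 : ∀ᶠ n : ℕ in Filter.atTop, (c : EReal) ≤ ((J n / D n : ℝ) : EReal) := by
    filter_upwards [h4] with n hn
    have hpos : 0 < J n / D n := by
      rw [← ENNReal.ofReal_pos]
      exact lt_of_le_of_lt zero_le hn
    rcases le_or_gt c 0 with h | h
    · exact_mod_cast le_trans h hpos.le
    · have := (ENNReal.ofReal_lt_ofReal_iff hpos).mp hn
      exact_mod_cast this.le
  have h6 : (c : EReal) ≤ Filter.liminf
      (fun n : ℕ => ((J n / D n : ℝ) : EReal)) Filter.atTop :=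
    Filter.le_liminf_of_le (by isBoundedDefault) h5
  exact absurd (lt_of_le_of_lt h6 hc1) (lt_irrefl _)
end

section
/- Let α, β, λ₁, λ₂ > 0, and let X and Y be independent random variables with X ~ Gamma(α, λ₁) and Y ~ Gamma(β, λ₂) (shape–rate parametrization, i.e., X has density (λ₁^α/Γ(α)) x^{α−1} e^{−λ₁ x} on (0,∞) and Y has density (λ₂^β/Γ(β)) y^{β−1} e^{−λ₂ y} on (0,∞)). Then π := X/(X+Y) takes values in (0,1) and has probability density function f_π(u) = (Γ(α+β)/(Γ(α)Γ(β))) · λ₁^α λ₂^β · u^{α−1} (1−u)^{β−1} / (λ₂ + (λ₁−λ₂)u)^{α+β} for 0 < u < 1. -/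
open MeasureTheory
open MeasureTheory Set
open scoped ENNReal

noncomputable section

lemma my_lintegral_image {s : Set ℝ} {f f' : ℝ → ℝ}
    (hs : MeasurableSet s) (hf' : ∀ x ∈ s, HasDerivWithinAt f (f' x) s x)
    (hf : Set.InjOn f s) (g : ℝ → ℝ≥0∞) :
    ∫⁻ x in f '' s, g x = ∫⁻ x in s, ENNReal.ofReal |f' x| * g (f x) := by
  simpa only [ContinuousLinearMap.det_toSpanSingleton] using
    lintegral_image_eq_lintegral_abs_det_fderiv_mul volume hs
      (fun x hx => (hf' x hx).hasFDerivWithinAt) hf g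

lemma my_gamma_int {γ c : ℝ} (hγ : 0 < γ) (hc : 0 < c) :
    ∫⁻ x in Set.Ioi (0:ℝ), ENNReal.ofReal (x ^ (γ - 1) * Real.exp (-(c * x)))
      = ENNReal.ofReal (Real.Gamma γ / c ^ γ) := by
  have h1 := ProbabilityTheory.lintegral_gammaPDF_eq_one hγ hc
  have hG : 0 < Real.Gamma γ := Real.Gamma_pos_of_pos hγ
  have hcg : 0 < c ^ γ := Real.rpow_pos_of_pos hc γ
  have h2 : ∫⁻ x in Set.Ioi (0:ℝ), ProbabilityTheory.gammaPDF γ c x = 1 := by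
    rw [← h1, ← lintegral_indicator measurableSet_Ioi]
    apply lintegral_congr_ae
    filter_upwards [compl_mem_ae_iff.mpr (measure_singleton (0:ℝ))] with x hx
    rcases lt_trichotomy x 0 with h | h | h
    · rw [Set.indicator_of_notMem (by simp [h.not_gt]), ProbabilityTheory.gammaPDF_of_neg h]
    · exact absurd h hx
    · exact Set.indicator_of_mem h _
  have key : ∀ x ∈ Set.Ioi (0:ℝ),
      ENNReal.ofReal (x ^ (γ - 1) * Real.exp (-(c * x)))
        = ENNReal.ofReal (Real.Gamma γ / c ^ γ) * ProbabilityTheory.gammaPDF γ c x := by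
    intro x hx
    rw [ProbabilityTheory.gammaPDF_of_nonneg (le_of_lt hx), ← ENNReal.ofReal_mul (by positivity)]
    congr 1
    field_simp
  rw [setLIntegral_congr_fun measurableSet_Ioi key,
    lintegral_const_mul' _ _ ENNReal.ofReal_ne_top, h2, mul_one]

lemma main_calc (α β l₁ l₂ : ℝ) (hα : 0 < α) (hβ : 0 < β) (hl₁ : 0 < l₁) (hl₂ : 0 < l₂) :
    Measure.map (fun p : ℝ × ℝ => p.1 / (p.1 + p.2))
      ((volume.withDensity (fun x => ENNReal.ofReal
          (if 0 < x then l₁ ^ α / Real.Gamma α * x ^ (α - 1) * Real.exp (-(l₁ * x)) else 0))).prod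
       (volume.withDensity (fun y => ENNReal.ofReal
          (if 0 < y then l₂ ^ β / Real.Gamma β * y ^ (β - 1) * Real.exp (-(l₂ * y)) else 0))))
      = volume.withDensity (fun u => ENNReal.ofReal
          (if u ∈ Set.Ioo (0 : ℝ) 1 then
            Real.Gamma (α + β) / (Real.Gamma α * Real.Gamma β) *
              (l₁ ^ α * l₂ ^ β) * u ^ (α - 1) * (1 - u) ^ (β - 1) /
                (l₂ + (l₁ - l₂) * u) ^ (α + β)
          else 0)) := by
  set f : ℝ → ℝ≥0∞ := fun x => ENNReal.ofReal
      (if 0 < x then l₁ ^ α / Real.Gamma α * x ^ (α - 1) * Real.exp (-(l₁ * x)) else 0) with hf_def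
  set g : ℝ → ℝ≥0∞ := fun y => ENNReal.ofReal
      (if 0 < y then l₂ ^ β / Real.Gamma β * y ^ (β - 1) * Real.exp (-(l₂ * y)) else 0) with hg_def
  set ρ : ℝ → ℝ≥0∞ := fun u => ENNReal.ofReal
      (if u ∈ Set.Ioo (0 : ℝ) 1 then
        Real.Gamma (α + β) / (Real.Gamma α * Real.Gamma β) *
          (l₁ ^ α * l₂ ^ β) * u ^ (α - 1) * (1 - u) ^ (β - 1) /
            (l₂ + (l₁ - l₂) * u) ^ (α + β)
      else 0) with hρ_def
  have hfm : Measurable f := by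
    apply Measurable.ennreal_ofReal
    apply Measurable.ite measurableSet_Ioi
    · fun_prop
    · exact measurable_const
  have hgm : Measurable g := by
    apply Measurable.ennreal_ofReal
    apply Measurable.ite measurableSet_Ioi
    · fun_prop
    · exact measurable_const
  set q : ℝ × ℝ → ℝ := fun p => p.1 / (p.1 + p.2) with hq_def
  have hq : Measurable q := measurable_fst.div (measurable_fst.add measurable_snd)
  refine Measure.ext fun s hs => ?_
  set k : ℝ → ℝ≥0∞ := s.indicator 1 with hk_def
  have hkm : Measurable k := measurable_one.indicator hs
  have hkq : Measurable fun p : ℝ × ℝ => k (q p) := hkm.comp hq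
  rw [Measure.map_apply hq hs, withDensity_apply _ hs]
  have step1 : ((volume.withDensity f).prod (volume.withDensity g)) (q ⁻¹' s)
      = ∫⁻ p, k (q p) ∂((volume.withDensity f).prod (volume.withDensity g)) := by
    rw [← lintegral_indicator_one (hq hs)]
    refine lintegral_congr fun p => ?_
    by_cases hp : q p ∈ s
    · simp [hk_def, hp, Set.indicator_of_mem, Set.mem_preimage]
    · simp [hk_def, hp, Set.indicator_of_notMem, Set.mem_preimage]
  rw [step1]
  rw [lintegral_prod _ hkq.aemeasurable]
  -- inner integral over withDensity g
  have step2 : ∀ x : ℝ, ∫⁻ y, k (q (x, y)) ∂(volume.withDensity g)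
      = ∫⁻ y, g y * k (q (x, y)) := fun x => by
    have hm : Measurable fun y => k (q (x, y)) := hkq.comp measurable_prodMk_left
    rw [lintegral_withDensity_eq_lintegral_mul volume hgm hm]
    rfl
  simp_rw [step2]
  have houter : Measurable fun x => ∫⁻ y, g y * k (q (x, y)) := by
    apply Measurable.lintegral_prod_right (f := fun x y => g y * k (q (x, y)))
    exact (hgm.comp measurable_snd).mul hkq
  rw [lintegral_withDensity_eq_lintegral_mul volume hfm houter]
  simp only [Pi.mul_apply]
  -- restrict outer integral to Ioi 0
  have hrestr : (∫⁻ x, f x * ∫⁻ y, g y * k (q (x, y)))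
      = ∫⁻ x in Ioi (0:ℝ), f x * ∫⁻ y, g y * k (q (x, y)) := by
    rw [← lintegral_indicator measurableSet_Ioi]
    refine lintegral_congr fun x => ?_
    by_cases hx : 0 < x
    · rw [Set.indicator_of_mem (Set.mem_Ioi.mpr hx)]
    · rw [Set.indicator_of_notMem (by simpa using hx)]
      have : f x = 0 := by simp [hf_def, if_neg hx]
      rw [this, zero_mul]
  rw [hrestr]
  -- change of variables in the inner integral, for fixed x > 0
  have inner_eq : ∀ x ∈ Ioi (0:ℝ), (∫⁻ y, g y * k (q (x, y)))
      = ∫⁻ u in Ioo (0:ℝ) 1, ENNReal.ofReal (x / u ^ 2) * (g (x / u - x) * k u) := by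
    intro x hx
    have hx0 : (0:ℝ) < x := hx
    have h1 : (∫⁻ y, g y * k (q (x, y))) = ∫⁻ y in Ioi (0:ℝ), g y * k (q (x, y)) := by
      rw [← lintegral_indicator measurableSet_Ioi]
      refine lintegral_congr fun y => ?_
      by_cases hy : 0 < y
      · rw [Set.indicator_of_mem (Set.mem_Ioi.mpr hy)]
      · rw [Set.indicator_of_notMem (by simpa using hy)]
        have : g y = 0 := by simp [hg_def, if_neg hy]
        rw [this, zero_mul]
    rw [h1]
    have himg : Ioi (0:ℝ) = (fun u => x / u - x) '' Ioo 0 1 := by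
      ext y
      simp only [Set.mem_image, Set.mem_Ioi, Set.mem_Ioo]
      constructor
      · intro hy
        refine ⟨x / (x + y), ⟨by positivity, ?_⟩, ?_⟩
        · rw [div_lt_one (by linarith)]; linarith
        · have hxy : x + y ≠ 0 := by positivity
          field_simp; ring
      · rintro ⟨u, ⟨hu0, hu1⟩, rfl⟩
        have : x < x / u := by
          rw [lt_div_iff₀ hu0]; nlinarith
        linarith
    have hderiv : ∀ u ∈ Ioo (0:ℝ) 1,
        HasDerivWithinAt (fun u => x / u - x) (-(x / u ^ 2)) (Ioo (0:ℝ) 1) u := by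
      intro u hu
      have hu0 : u ≠ 0 := ne_of_gt hu.1
      have h := ((hasDerivAt_inv hu0).const_mul x).sub_const x
      have heq : (fun u : ℝ => x * u⁻¹ - x) = fun u : ℝ => x / u - x := by
        funext v; rw [div_eq_mul_inv]
      rw [heq] at h
      have : x * -(u ^ 2)⁻¹ = -(x / u ^ 2) := by field_simp
      rw [this] at h
      exact h.hasDerivWithinAt
    have hinj : Set.InjOn (fun u => x / u - x) (Ioo (0:ℝ) 1) := by
      intro u hu v hv h
      simp only at h
      have h2 : x / u = x / v := by linarith
      rw [div_eq_div_iff (ne_of_gt hu.1) (ne_of_gt hv.1)] at h2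
      exact (mul_left_cancel₀ (ne_of_gt hx0) h2).symm
    rw [himg, my_lintegral_image measurableSet_Ioo hderiv hinj]
    apply setLIntegral_congr_fun measurableSet_Ioo
    intro u hu
    beta_reduce
    obtain ⟨hu0, hu1⟩ := hu
    have habs : |(-(x / u ^ 2))| = x / u ^ 2 := by
      rw [abs_neg, abs_of_nonneg (by positivity)]
    have hqx : q (x, x / u - x) = u := by
      simp only [hq_def]
      have : x + (x / u - x) = x / u := by ring
      rw [this]
      rw [div_div_eq_mul_div, mul_comm, mul_div_assoc, div_self (ne_of_gt hx0), mul_one]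
    rw [habs, hqx]
  have step3 : ∫⁻ x in Ioi (0:ℝ), f x * ∫⁻ y, g y * k (q (x, y))
      = ∫⁻ x in Ioi (0:ℝ), ∫⁻ u in Ioo (0:ℝ) 1,
          f x * (ENNReal.ofReal (x / u ^ 2) * (g (x / u - x) * k u)) := by
    apply setLIntegral_congr_fun measurableSet_Ioi
    intro x hx
    beta_reduce
    rw [inner_eq x hx, ← lintegral_const_mul' (f x) _ (by rw [hf_def]; exact ENNReal.ofReal_ne_top : f x ≠ ⊤)]
  rw [step3]
  have hH : Measurable fun z : ℝ × ℝ =>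
      f z.1 * (ENNReal.ofReal (z.1 / z.2 ^ 2) * (g (z.1 / z.2 - z.1) * k z.2)) := by
    refine (hfm.comp measurable_fst).mul (Measurable.mul ?_ ?_)
    · exact (measurable_fst.div (measurable_snd.pow measurable_const)).ennreal_ofReal
    · exact (hgm.comp ((measurable_fst.div measurable_snd).sub measurable_fst)).mul
        (hkm.comp measurable_snd)
  rw [lintegral_lintegral_swap hH.aemeasurable]
  have hΓα := Real.Gamma_pos_of_pos hα
  have hΓβ := Real.Gamma_pos_of_pos hβ
  have step4 : ∀ u ∈ Ioo (0:ℝ) 1,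
      (∫⁻ x in Ioi (0:ℝ), f x * (ENNReal.ofReal (x / u ^ 2) * (g (x / u - x) * k u)))
        = k u * ρ u := by
    intro u hu
    obtain ⟨hu0, hu1⟩ := hu
    have h1u : (0:ℝ) < 1 - u := by linarith
    set L := l₂ + (l₁ - l₂) * u with hL_def
    have hL : 0 < L := by rw [hL_def]; nlinarith
    set c := l₁ + l₂ * ((1 - u) / u) with hc_def
    have hc : 0 < c := by rw [hc_def]; positivity
    set D := l₁ ^ α / Real.Gamma α * (l₂ ^ β / Real.Gamma β) * ((1 - u) / u) ^ (β - 1) / u ^ 2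
      with hD_def
    have hD : 0 ≤ D := by rw [hD_def]; positivity
    have pt : ∀ x ∈ Ioi (0:ℝ),
        f x * (ENNReal.ofReal (x / u ^ 2) * (g (x / u - x) * k u))
          = k u * ENNReal.ofReal D
              * ENNReal.ofReal (x ^ (α + β - 1) * Real.exp (-(c * x))) := by
      intro x hx
      have hx0 : (0:ℝ) < x := hx
      have hxu : 0 < x / u - x := by
        rw [sub_pos, lt_div_iff₀ hu0]; nlinarith
      rw [hf_def, hg_def]
      simp only [if_pos hx0, if_pos hxu]
      have hA : (0:ℝ) ≤ l₁ ^ α / Real.Gamma α * x ^ (α - 1) * Real.exp (-(l₁ * x)) := by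
        positivity
      have hB : (0:ℝ) ≤ x / u ^ 2 := by positivity
      have hreal : l₁ ^ α / Real.Gamma α * x ^ (α - 1) * Real.exp (-(l₁ * x)) * (x / u ^ 2)
            * (l₂ ^ β / Real.Gamma β * (x / u - x) ^ (β - 1) * Real.exp (-(l₂ * (x / u - x))))
          = D * (x ^ (α + β - 1) * Real.exp (-(c * x))) := by
        have hsub : x / u - x = x * ((1 - u) / u) := by field_simp
        have hpow : (x * ((1 - u) / u)) ^ (β - 1)
            = x ^ (β - 1) * ((1 - u) / u) ^ (β - 1) :=
          Real.mul_rpow hx0.le (by positivity)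
        have hxpow : x ^ (α - 1) * x ^ (β - 1) * x = x ^ (α + β - 1) := by
          rw [← Real.rpow_add hx0, ← Real.rpow_add_one (ne_of_gt hx0)]
          congr 1; ring
        have hexp : Real.exp (-(l₁ * x)) * Real.exp (-(l₂ * (x * ((1 - u) / u))))
            = Real.exp (-(c * x)) := by
          rw [← Real.exp_add]; congr 1; rw [hc_def]; ring
        rw [hsub, hpow, ← hxpow, ← hexp, hD_def]
        ring
      calc ENNReal.ofReal (l₁ ^ α / Real.Gamma α * x ^ (α - 1) * Real.exp (-(l₁ * x)))
            * (ENNReal.ofReal (x / u ^ 2)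
              * (ENNReal.ofReal (l₂ ^ β / Real.Gamma β * (x / u - x) ^ (β - 1)
                  * Real.exp (-(l₂ * (x / u - x)))) * k u))
          = k u * (ENNReal.ofReal (l₁ ^ α / Real.Gamma α * x ^ (α - 1) * Real.exp (-(l₁ * x)))
              * ENNReal.ofReal (x / u ^ 2)
              * ENNReal.ofReal (l₂ ^ β / Real.Gamma β * (x / u - x) ^ (β - 1)
                  * Real.exp (-(l₂ * (x / u - x))))) := by ring
        _ = k u * ENNReal.ofReal (l₁ ^ α / Real.Gamma α * x ^ (α - 1) * Real.exp (-(l₁ * x))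
              * (x / u ^ 2)
              * (l₂ ^ β / Real.Gamma β * (x / u - x) ^ (β - 1)
                  * Real.exp (-(l₂ * (x / u - x))))) := by
            rw [← ENNReal.ofReal_mul hA, ← ENNReal.ofReal_mul (by positivity)]
        _ = k u * ENNReal.ofReal (D * (x ^ (α + β - 1) * Real.exp (-(c * x)))) := by rw [hreal]
        _ = k u * ENNReal.ofReal D * ENNReal.ofReal (x ^ (α + β - 1) * Real.exp (-(c * x))) := by
            rw [ENNReal.ofReal_mul hD, mul_assoc]
    have hkne : k u ≠ ⊤ := by
      rw [hk_def]
      by_cases hus : u ∈ s <;> simp [Set.indicator, hus]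
    rw [setLIntegral_congr_fun measurableSet_Ioi pt,
      lintegral_const_mul' _ _ (ENNReal.mul_ne_top hkne ENNReal.ofReal_ne_top),
      my_gamma_int (by positivity) hc]
    rw [mul_assoc, ← ENNReal.ofReal_mul hD]
    congr 1
    rw [hρ_def]
    simp only [Set.mem_Ioo, if_pos (And.intro hu0 hu1)]
    congr 1
    -- real algebra
    have hcL : c = L / u := by rw [hc_def, hL_def]; field_simp; ring
    have hcpow : c ^ (α + β) = L ^ (α + β) / u ^ (α + β) := by
      rw [hcL, Real.div_rpow hL.le hu0.le]
    have hfrac : ((1 - u) / u) ^ (β - 1) = (1 - u) ^ (β - 1) / u ^ (β - 1) :=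
      Real.div_rpow h1u.le hu0.le _
    have hupow : u ^ (α - 1) * u ^ (β - 1) * u ^ (2:ℕ) = u ^ (α + β) := by
      rw [← Real.rpow_natCast u 2, ← Real.rpow_add hu0, ← Real.rpow_add hu0]
      congr 1; push_cast; ring
    have hua : u ^ (α - 1) = u ^ (α + β) / (u ^ (β - 1) * u ^ (2:ℕ)) := by
      rw [← hupow]; field_simp
    rw [hD_def, hcpow, hfrac, hua]
    have h1 : u ^ (β - 1) ≠ 0 := ne_of_gt (Real.rpow_pos_of_pos hu0 _)
    have h2 : u ^ (α + β) ≠ 0 := ne_of_gt (Real.rpow_pos_of_pos hu0 _)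
    have h3 : L ^ (α + β) ≠ 0 := ne_of_gt (Real.rpow_pos_of_pos hL _)
    have h4 : (u:ℝ) ^ (2:ℕ) ≠ 0 := pow_ne_zero _ (ne_of_gt hu0)
    rw [← hL_def]
    field_simp
  rw [setLIntegral_congr_fun measurableSet_Ioo step4]
  -- final indicator juggling
  rw [← lintegral_indicator measurableSet_Ioo, ← lintegral_indicator hs]
  refine lintegral_congr fun u => ?_
  by_cases hu : u ∈ Ioo (0:ℝ) 1 <;> by_cases hus : u ∈ s
  · rw [Set.indicator_of_mem hu, Set.indicator_of_mem hus, hk_def,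
      Set.indicator_of_mem hus, Pi.one_apply, one_mul]
  · rw [Set.indicator_of_mem hu, Set.indicator_of_notMem hus, hk_def,
      Set.indicator_of_notMem hus, zero_mul]
  · rw [Set.indicator_of_notMem hu, Set.indicator_of_mem hus, hρ_def]
    simp only [if_neg hu, ENNReal.ofReal_zero]
  · rw [Set.indicator_of_notMem hu, Set.indicator_of_notMem hus]

lemma ae_pos_of_gamma {Ω : Type*} [MeasureSpace Ω]
    {a l : ℝ} {X : Ω → ℝ} (hX : Measurable X)
    (hXdens : Measure.map X volume
      = volume.withDensity (fun x => ENNReal.ofReal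
          (if 0 < x then l ^ a / Real.Gamma a * x ^ (a - 1) * Real.exp (-(l * x)) else 0))) :
    ∀ᵐ ω, 0 < X ω := by
  have h0 : volume (X ⁻¹' (Set.Iic 0)) = 0 := by
    rw [← Measure.map_apply hX measurableSet_Iic, hXdens,
      withDensity_apply _ measurableSet_Iic]
    rw [setLIntegral_congr_fun measurableSet_Iic
      (fun x (hx : x ∈ Set.Iic 0) => by
        rw [if_neg (not_lt.mpr hx), ENNReal.ofReal_zero] : ∀ x ∈ Set.Iic (0:ℝ), _ = (0:ℝ≥0∞))]
    simp
  rw [ae_iff]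
  convert h0 using 2
  ext ω
  simp [not_lt]

/-- If `X ~ Gamma(α, λ₁)` and `Y ~ Gamma(β, λ₂)` are independent (shape–rate parametrization),
then `π := X/(X+Y)` takes values in `(0,1)` and has density
`u ↦ (Γ(α+β)/(Γ(α)Γ(β))) · λ₁^α λ₂^β · u^(α−1)(1−u)^(β−1) / (λ₂ + (λ₁−λ₂)u)^(α+β)`
on `(0,1)`. -/
theorem stmt_19 {Ω : Type*} [MeasureSpace Ω]
    (hprob : IsProbabilityMeasure (volume : Measure Ω))
    (α β l₁ l₂ : ℝ) (hα : 0 < α) (hβ : 0 < β) (hl₁ : 0 < l₁) (hl₂ : 0 < l₂)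
    (X Y : Ω → ℝ) (hX : Measurable X) (hY : Measurable Y)
    (hindep : ProbabilityTheory.IndepFun X Y)
    (hXdens : Measure.map X volume
      = volume.withDensity (fun x => ENNReal.ofReal
          (if 0 < x then l₁ ^ α / Real.Gamma α * x ^ (α - 1) * Real.exp (-(l₁ * x)) else 0)))
    (hYdens : Measure.map Y volume
      = volume.withDensity (fun y => ENNReal.ofReal
          (if 0 < y then l₂ ^ β / Real.Gamma β * y ^ (β - 1) * Real.exp (-(l₂ * y)) else 0))) :
    (∀ᵐ ω, X ω / (X ω + Y ω) ∈ Set.Ioo (0 : ℝ) 1) ∧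
    Measure.map (fun ω => X ω / (X ω + Y ω)) volume
      = volume.withDensity (fun u => ENNReal.ofReal
          (if u ∈ Set.Ioo (0 : ℝ) 1 then
            Real.Gamma (α + β) / (Real.Gamma α * Real.Gamma β) *
              (l₁ ^ α * l₂ ^ β) * u ^ (α - 1) * (1 - u) ^ (β - 1) /
                (l₂ + (l₁ - l₂) * u) ^ (α + β)
          else 0)) := by
  have hXpos : ∀ᵐ ω, 0 < X ω := ae_pos_of_gamma hX hXdens
  have hYpos : ∀ᵐ ω, 0 < Y ω := ae_pos_of_gamma hY hYdens
  constructor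
  · filter_upwards [hXpos, hYpos] with ω hx hy
    exact ⟨div_pos hx (by linarith), (div_lt_one (by linarith)).mpr (by linarith)⟩
  · have hq : Measurable fun p : ℝ × ℝ => p.1 / (p.1 + p.2) :=
      measurable_fst.div (measurable_fst.add measurable_snd)
    have hjoint : volume.map (fun ω => (X ω, Y ω)) = (volume.map X).prod (volume.map Y) :=
      (ProbabilityTheory.indepFun_iff_map_prod_eq_prod_map_map hX.aemeasurable
        hY.aemeasurable).mp hindep
    have hmap : Measure.map (fun ω => X ω / (X ω + Y ω)) volume
        = Measure.map (fun p : ℝ × ℝ => p.1 / (p.1 + p.2))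
            ((volume.map X).prod (volume.map Y)) := by
      rw [← hjoint, Measure.map_map hq (hX.prodMk hY)]
      rfl
    rw [hmap, hXdens, hYdens]
    exact main_calc α β l₁ l₂ hα hβ hl₁ hl₂
end
end
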